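/- arXiv:1908.06483 — 2 statements merged into one kernel-verified Lean document; each statement's English description precedes it below -/
import Mathlib

section
/- For every a ≥ 1, the first Dirichlet biharmonic eigenvalue of the rectangle R_a satisfies λ₁(a) ≥ ω₁⁴(a⁴ + a⁻⁴) + 2π⁴. -/
open MeasureTheory Real Filter

noncomputable section

/-- Directional (partial) derivative of `u : ℝ × ℝ → ℝ` in direction `v`. -/
def pd (v : ℝ × ℝ) (u : ℝ × ℝ → ℝ) : ℝ × ℝ → ℝ := fun p => fderiv ℝ u p v

/-- Second partial derivative `∂²u/∂x²`. -/
def uxx (u : ℝ × ℝ → ℝ) : ℝ × ℝ → ℝ := pd (1, 0) (pd (1, 0) u)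

/-- Second partial derivative `∂²u/∂y²`. -/
def uyy (u : ℝ × ℝ → ℝ) : ℝ × ℝ → ℝ := pd (0, 1) (pd (0, 1) u)

/-- Mixed second partial derivative `∂²u/∂x∂y`. -/
def uxy (u : ℝ × ℝ → ℝ) : ℝ × ℝ → ℝ := pd (0, 1) (pd (1, 0) u)

/-- The Laplacian `Δu = u_xx + u_yy`. -/
def lap (u : ℝ × ℝ → ℝ) : ℝ × ℝ → ℝ := fun p => uxx u p + uyy u p

/-- The open rectangle `R_a = (0,a) × (0,1/a)` of unit area. -/
def Rect (a : ℝ) : Set (ℝ × ℝ) := Set.Ioo 0 a ×ˢ Set.Ioo 0 (1 / a)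

/-- Admissible test functions: smooth, compactly supported inside `Ω`. -/
def Adm (Ω : Set (ℝ × ℝ)) (u : ℝ × ℝ → ℝ) : Prop :=
  ContDiff ℝ (⊤ : ℕ∞) u ∧ HasCompactSupport u ∧ tsupport u ⊆ Ω

/-- First Dirichlet eigenvalue of the biharmonic operator on `R_a`,
characterized variationally as the infimum of the Rayleigh quotient. -/
def lam1 (a : ℝ) : ℝ :=
  sInf { μ | ∃ u : ℝ × ℝ → ℝ, Adm (Rect a) u ∧ u ≠ 0 ∧
    μ = (∫ p, (lap u p) ^ 2) / (∫ p, (u p) ^ 2) }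

namespace BiharmLB

variable {ω : ℝ}

lemma sinh_lt_mul_cosh {t : ℝ} (ht : 0 < t) : Real.sinh t < t * Real.cosh t := by
  have h : StrictMonoOn (fun s : ℝ => s * Real.cosh s - Real.sinh s) (Set.Ici 0) := by
    apply strictMonoOn_of_deriv_pos (convex_Ici 0)
    · fun_prop
    · intro x hx
      rw [interior_Ici] at hx
      have h1 : HasDerivAt (fun s : ℝ => s * Real.cosh s - Real.sinh s)
          (1 * Real.cosh x + x * Real.sinh x - Real.cosh x) x :=
        ((hasDerivAt_id x).mul (Real.hasDerivAt_cosh x)).sub (Real.hasDerivAt_sinh x)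
      rw [h1.deriv]
      have hs : 0 < Real.sinh x := Real.sinh_pos_iff.2 hx
      nlinarith [mul_pos hx hs]
  have := h (Set.self_mem_Ici) (Set.mem_Ici.2 ht.le) ht
  simpa using this

lemma mul_cos_lt_sin {t : ℝ} (ht : 0 < t) (ht' : t ≤ π / 2) : t * Real.cos t < Real.sin t := by
  have h : StrictMonoOn (fun s : ℝ => Real.sin s - s * Real.cos s) (Set.Icc 0 (π / 2)) := by
    apply strictMonoOn_of_deriv_pos (convex_Icc 0 (π / 2))
    · fun_prop
    · intro x hx
      rw [interior_Icc] at hx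
      have h1 : HasDerivAt (fun s : ℝ => Real.sin s - s * Real.cos s)
          (Real.cos x - (1 * Real.cos x + x * -Real.sin x)) x :=
        (Real.hasDerivAt_sin x).sub ((hasDerivAt_id x).mul (Real.hasDerivAt_cos x))
      rw [h1.deriv]
      have hs : 0 < Real.sin x := Real.sin_pos_of_pos_of_lt_pi hx.1 (by
        have := Real.pi_pos; linarith [hx.2])
      have : Real.cos x - (1 * Real.cos x + x * -Real.sin x) = x * Real.sin x := by ring
      rw [this]
      exact mul_pos hx.1 hs
  have := h (Set.mem_Icc.2 ⟨le_refl 0, by positivity⟩) (Set.mem_Icc.2 ⟨ht.le, ht'⟩) ht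
  simpa using this

lemma coscosh_lt_one_of_small {t : ℝ} (ht : 0 < t) (ht' : t ≤ π / 2) :
    Real.cos t * Real.cosh t < 1 := by
  have h : StrictAntiOn (fun s : ℝ => Real.cos s * Real.cosh s) (Set.Icc 0 (π / 2)) := by
    apply strictAntiOn_of_deriv_neg (convex_Icc 0 (π / 2))
    · fun_prop
    · intro x hx
      rw [interior_Icc] at hx
      have h1 : HasDerivAt (fun s : ℝ => Real.cos s * Real.cosh s)
          (-Real.sin x * Real.cosh x + Real.cos x * Real.sinh x) x :=
        (Real.hasDerivAt_cos x).mul (Real.hasDerivAt_cosh x)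
      rw [h1.deriv]
      have hc : 0 < Real.cos x := Real.cos_pos_of_mem_Ioo ⟨by linarith [hx.1], hx.2⟩
      have hch : 0 < Real.cosh x := Real.cosh_pos x
      have h2 := sinh_lt_mul_cosh hx.1
      have h3 := mul_cos_lt_sin hx.1 hx.2.le
      nlinarith
  have := h (Set.mem_Icc.2 ⟨le_refl 0, by positivity⟩) (Set.mem_Icc.2 ⟨ht.le, ht'⟩) ht
  simpa using this

variable {ω : ℝ}

lemma pi_half_lt_omega (hω : IsLeast {x : ℝ | 0 < x ∧ Real.cos x * Real.cosh x = 1} ω) :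
    π / 2 < ω := by
  rcases hω.1 with ⟨hpos, heq⟩
  by_contra h
  push_neg at h
  exact absurd heq (ne_of_lt (coscosh_lt_one_of_small hpos h))

lemma coscosh_lt_one (hω : IsLeast {x : ℝ | 0 < x ∧ Real.cos x * Real.cosh x = 1} ω)
    {t : ℝ} (ht : t ∈ Set.Ioo 0 ω) : Real.cos t * Real.cosh t < 1 := by
  by_contra h
  push_neg at h
  rcases eq_or_lt_of_le h with heq | hlt
  · exact absurd (hω.2 ⟨ht.1, heq.symm⟩) (not_le.2 ht.2)
  · have hπ : π / 2 < ω := pi_half_lt_omega hω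
    have hcont : ContinuousOn (fun s : ℝ => Real.cos s * Real.cosh s) (Set.uIcc (π / 2) t) := by
      fun_prop
    have hmem : (1 : ℝ) ∈ Set.uIcc (Real.cos (π / 2) * Real.cosh (π / 2))
        (Real.cos t * Real.cosh t) := by
      rw [Real.cos_pi_div_two, zero_mul]
      exact Set.mem_uIcc.2 (Or.inl ⟨zero_le_one, hlt.le⟩)
    obtain ⟨r, hr, hreq⟩ := intermediate_value_uIcc hcont hmem
    have hπpos : (0 : ℝ) < π / 2 := by positivity
    have hrb : 0 < r ∧ r < ω := by
      rcases Set.mem_uIcc.1 hr with ⟨h1, h2⟩ | ⟨h1, h2⟩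
      · exact ⟨lt_of_lt_of_le hπpos h1, lt_of_le_of_lt h2 ht.2⟩
      · exact ⟨lt_of_lt_of_le ht.1 h1, lt_of_le_of_lt h2 hπ⟩
    exact absurd (hω.2 ⟨hrb.1, hreq⟩) (not_le.2 hrb.2)


/-- Unit-scale clamped-beam eigenfunction. -/
def FF (ω : ℝ) : ℝ → ℝ := fun t =>
  (Real.sinh ω - Real.sin ω) * (Real.cosh t - Real.cos t)
    - (Real.cosh ω - Real.cos ω) * (Real.sinh t - Real.sin t)

def FF1 (ω : ℝ) : ℝ → ℝ := fun t =>
  (Real.sinh ω - Real.sin ω) * (Real.sinh t + Real.sin t)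
    - (Real.cosh ω - Real.cos ω) * (Real.cosh t - Real.cos t)

def FF2 (ω : ℝ) : ℝ → ℝ := fun t =>
  (Real.sinh ω - Real.sin ω) * (Real.cosh t + Real.cos t)
    - (Real.cosh ω - Real.cos ω) * (Real.sinh t + Real.sin t)

def FF3 (ω : ℝ) : ℝ → ℝ := fun t =>
  (Real.sinh ω - Real.sin ω) * (Real.sinh t - Real.sin t)
    - (Real.cosh ω - Real.cos ω) * (Real.cosh t + Real.cos t)

lemma hasDerivAt_FF (t : ℝ) : HasDerivAt (FF ω) (FF1 ω t) t := by
  have h := (((Real.hasDerivAt_cosh t).sub (Real.hasDerivAt_cos t)).const_mul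
      (Real.sinh ω - Real.sin ω)).sub
    (((Real.hasDerivAt_sinh t).sub (Real.hasDerivAt_sin t)).const_mul
      (Real.cosh ω - Real.cos ω))
  convert (show HasDerivAt (FF ω) _ t from h) using 1
  unfold FF1; ring

lemma hasDerivAt_FF1 (t : ℝ) : HasDerivAt (FF1 ω) (FF2 ω t) t := by
  have h := (((Real.hasDerivAt_sinh t).add (Real.hasDerivAt_sin t)).const_mul
      (Real.sinh ω - Real.sin ω)).sub
    (((Real.hasDerivAt_cosh t).sub (Real.hasDerivAt_cos t)).const_mul
      (Real.cosh ω - Real.cos ω))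
  convert (show HasDerivAt (FF1 ω) _ t from h) using 1
  unfold FF2; ring

lemma hasDerivAt_FF2 (t : ℝ) : HasDerivAt (FF2 ω) (FF3 ω t) t := by
  have h := (((Real.hasDerivAt_cosh t).add (Real.hasDerivAt_cos t)).const_mul
      (Real.sinh ω - Real.sin ω)).sub
    (((Real.hasDerivAt_sinh t).add (Real.hasDerivAt_sin t)).const_mul
      (Real.cosh ω - Real.cos ω))
  convert (show HasDerivAt (FF2 ω) _ t from h) using 1
  unfold FF3; ring

lemma hasDerivAt_FF3 (t : ℝ) : HasDerivAt (FF3 ω) (FF ω t) t := by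
  have h := (((Real.hasDerivAt_sinh t).sub (Real.hasDerivAt_sin t)).const_mul
      (Real.sinh ω - Real.sin ω)).sub
    (((Real.hasDerivAt_cosh t).add (Real.hasDerivAt_cos t)).const_mul
      (Real.cosh ω - Real.cos ω))
  convert (show HasDerivAt (FF3 ω) _ t from h) using 1
  unfold FF; ring

lemma continuous_FF : Continuous (FF ω) := by unfold FF; fun_prop
lemma continuous_FF1 : Continuous (FF1 ω) := by unfold FF1; fun_prop
lemma continuous_FF2 : Continuous (FF2 ω) := by unfold FF2; fun_prop
lemma continuous_FF3 : Continuous (FF3 ω) := by unfold FF3; fun_prop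

lemma FF_zero : FF ω 0 = 0 := by simp [FF]
lemma FF1_zero : FF1 ω 0 = 0 := by simp [FF1]
lemma FF_omega : FF ω ω = 0 := by unfold FF; ring

lemma FF1_omega (hrel : Real.cos ω * Real.cosh ω = 1) : FF1 ω ω = 0 := by
  have h1 : Real.cosh ω ^ 2 - Real.sinh ω ^ 2 = 1 := Real.cosh_sq_sub_sinh_sq ω
  have h2 : Real.sin ω ^ 2 + Real.cos ω ^ 2 = 1 := Real.sin_sq_add_cos_sq ω
  unfold FF1
  linear_combination (-1 : ℝ) * h1 - h2 + 2 * hrel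

lemma coshsubcos_pos {t : ℝ} (ht : t ≠ 0) : 0 < Real.cosh t - Real.cos t := by
  have h1 : 1 < Real.cosh t := Real.one_lt_cosh.2 ht
  have h2 := Real.cos_le_one t
  linarith


lemma omega_pos (hω : IsLeast {x : ℝ | 0 < x ∧ Real.cos x * Real.cosh x = 1} ω) : 0 < ω :=
  hω.1.1

lemma A_pos (hω : IsLeast {x : ℝ | 0 < x ∧ Real.cos x * Real.cosh x = 1} ω) :
    0 < Real.sinh ω - Real.sin ω := by
  have h1 : ω < Real.sinh ω := Real.self_lt_sinh_iff.2 hω.1.1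
  have h2 := Real.sin_le_one ω
  have h3 : π / 2 < ω := pi_half_lt_omega hω
  have h4 : (2:ℝ) ≤ π := Real.two_le_pi
  linarith

lemma FF_pos (hω : IsLeast {x : ℝ | 0 < x ∧ Real.cos x * Real.cosh x = 1} ω)
    {t : ℝ} (ht : t ∈ Set.Ioo 0 ω) : 0 < FF ω t := by
  set gq : ℝ → ℝ := fun s => (Real.sinh s - Real.sin s) / (Real.cosh s - Real.cos s) with hgq
  have hmono : StrictMonoOn gq (Set.Ioc 0 ω) := by
    apply strictMonoOn_of_deriv_pos (convex_Ioc 0 ω)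
    · apply ContinuousOn.div (by fun_prop) (by fun_prop)
      intro x hx
      exact (coshsubcos_pos (ne_of_gt hx.1)).ne'
    · intro x hx
      rw [interior_Ioc] at hx
      have hden : Real.cosh x - Real.cos x ≠ 0 := (coshsubcos_pos (ne_of_gt hx.1)).ne'
      have hd : HasDerivAt gq
          (((Real.cosh x - Real.cos x) * (Real.cosh x - Real.cos x)
            - (Real.sinh x - Real.sin x) * (Real.sinh x + Real.sin x))
            / (Real.cosh x - Real.cos x) ^ 2) x := by
        have := ((Real.hasDerivAt_sinh x).sub (Real.hasDerivAt_sin x)).div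
          ((Real.hasDerivAt_cosh x).sub (Real.hasDerivAt_cos x)) hden
        convert (show HasDerivAt gq _ x from this) using 1
        simp only [Pi.sub_apply]
        ring
      rw [hd.deriv]
      apply div_pos
      · have h1 : Real.cosh x ^ 2 - Real.sinh x ^ 2 = 1 := Real.cosh_sq_sub_sinh_sq x
        have h2 : Real.sin x ^ 2 + Real.cos x ^ 2 = 1 := Real.sin_sq_add_cos_sq x
        have h3 := coscosh_lt_one hω hx
        nlinarith
      · positivity
  have hlt : gq t < gq ω :=
    hmono ⟨ht.1, ht.2.le⟩ ⟨lt_trans ht.1 ht.2, le_rfl⟩ ht.2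
  have hdt : 0 < Real.cosh t - Real.cos t := coshsubcos_pos (ne_of_gt ht.1)
  have hdω : 0 < Real.cosh ω - Real.cos ω := coshsubcos_pos (ne_of_gt (lt_trans ht.1 ht.2))
  rw [hgq] at hlt
  simp only at hlt
  rw [div_lt_div_iff₀ hdt hdω] at hlt
  unfold FF
  nlinarith


/-- `W = F'^2 - 2 F F''`. -/
def WW (ω : ℝ) : ℝ → ℝ := fun t => (FF1 ω t) ^ 2 - 2 * FF ω t * FF2 ω t

lemma hasDerivAt_WW (t : ℝ) : HasDerivAt (WW ω) (-2 * FF ω t * FF3 ω t) t := by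
  have h := ((hasDerivAt_FF1 (ω := ω) t).pow 2).sub
    (((hasDerivAt_FF (ω := ω) t).const_mul 2).mul (hasDerivAt_FF2 (ω := ω) t))
  convert (show HasDerivAt (WW ω) _ t from h) using 1
  ring

lemma continuous_WW : Continuous (WW ω) := by
  unfold WW
  exact (continuous_FF1.pow 2).sub ((continuous_const.mul continuous_FF).mul continuous_FF2)

lemma WW_zero : WW ω 0 = 0 := by simp [WW, FF_zero, FF1_zero]

lemma WW_omega (hrel : Real.cos ω * Real.cosh ω = 1) : WW ω ω = 0 := by
  simp [WW, FF_omega, FF1_omega hrel]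

lemma FF3_strictMono (hω : IsLeast {x : ℝ | 0 < x ∧ Real.cos x * Real.cosh x = 1} ω) :
    StrictMonoOn (FF3 ω) (Set.Icc 0 ω) := by
  apply strictMonoOn_of_deriv_pos (convex_Icc 0 ω) continuous_FF3.continuousOn
  intro x hx
  rw [interior_Icc] at hx
  rw [(hasDerivAt_FF3 x).deriv]
  exact FF_pos hω hx

lemma WW_nonneg (hω : IsLeast {x : ℝ | 0 < x ∧ Real.cos x * Real.cosh x = 1} ω)
    {t : ℝ} (ht : t ∈ Set.Icc 0 ω) : 0 ≤ WW ω t := by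
  rcases eq_or_lt_of_le ht.1 with h0 | h0
  · rw [← h0, WW_zero]
  rcases eq_or_lt_of_le ht.2 with h1 | h1
  · rw [h1, WW_omega hω.1.2]
  rcases le_or_gt (FF3 ω t) 0 with hF3 | hF3
  · have hmono : MonotoneOn (WW ω) (Set.Icc 0 t) := by
      apply monotoneOn_of_deriv_nonneg (convex_Icc 0 t) continuous_WW.continuousOn
      · intro x _
        exact ((hasDerivAt_WW x).differentiableAt).differentiableWithinAt
      · intro x hx
        rw [interior_Icc] at hx
        rw [(hasDerivAt_WW x).deriv]
        have hFx : 0 < FF ω x := FF_pos hω ⟨hx.1, lt_trans hx.2 h1⟩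
        have hF3x : FF3 ω x < FF3 ω t :=
          FF3_strictMono hω ⟨hx.1.le, le_trans hx.2.le ht.2⟩ ht hx.2
        nlinarith
    have := hmono (Set.left_mem_Icc.2 h0.le) (Set.right_mem_Icc.2 h0.le) h0.le
    rwa [WW_zero] at this
  · have hmono : AntitoneOn (WW ω) (Set.Icc t ω) := by
      apply antitoneOn_of_deriv_nonpos (convex_Icc t ω) continuous_WW.continuousOn
      · intro x _
        exact ((hasDerivAt_WW x).differentiableAt).differentiableWithinAt
      · intro x hx
        rw [interior_Icc] at hx
        rw [(hasDerivAt_WW x).deriv]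
        have hFx : 0 < FF ω x := FF_pos hω ⟨lt_trans h0 hx.1, hx.2⟩
        have hF3x : FF3 ω t < FF3 ω x :=
          FF3_strictMono hω ht ⟨le_trans ht.1 hx.1.le, hx.2.le⟩ hx.1
        nlinarith
    have := hmono (Set.left_mem_Icc.2 h1.le) (Set.right_mem_Icc.2 h1.le) h1.le
    rwa [WW_omega hω.1.2] at this


lemma tsupport_deriv_subset' (g : ℝ → ℝ) : tsupport (deriv g) ⊆ tsupport g :=
  closure_minimal support_deriv_subset isClosed_closure

lemma exists_encl {L : ℝ} {g : ℝ → ℝ} (hcs : HasCompactSupport g)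
    (hsupp : tsupport g ⊆ Set.Ioo 0 L) (hne : (tsupport g).Nonempty) :
    ∃ c d : ℝ, 0 < c ∧ c < d ∧ d < L ∧ tsupport g ⊆ Set.Ioo c d := by
  set K := tsupport g
  have hK : IsCompact K := hcs
  have hc0 : sInf K ∈ K := hK.sInf_mem hne
  have hd0 : sSup K ∈ K := hK.sSup_mem hne
  have h1 : (0 : ℝ) < sInf K := (hsupp hc0).1
  have h2 : sSup K < L := (hsupp hd0).2
  refine ⟨sInf K / 2, (sSup K + L) / 2, by linarith, ?_, by linarith, ?_⟩
  · have : sInf K ≤ sSup K := csInf_le_csSup hne hK.bddBelow hK.bddAbove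
    linarith
  · intro x hx
    have hx1 : sInf K ≤ x := csInf_le hK.bddBelow hx
    have hx2 : x ≤ sSup K := le_csSup hK.bddAbove hx
    exact ⟨by linarith, by linarith⟩

lemma poincare1D {L : ℝ} (hL : 0 < L) {g : ℝ → ℝ} (hg : ContDiff ℝ (⊤ : ℕ∞) g)
    (hcs : HasCompactSupport g) (hsupp : tsupport g ⊆ Set.Ioo 0 L) :
    (π / L) ^ 2 * ∫ x, (g x) ^ 2 ≤ ∫ x, (deriv g x) ^ 2 := by
  rcases Set.eq_empty_or_nonempty (tsupport g) with hemp | hne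
  · have hg0 : g = fun _ => 0 := by
      funext x
      exact image_eq_zero_of_notMem_tsupport (by simp [hemp])
    rw [hg0]
    simp
  obtain ⟨c, d, hc, hcd, hdL, hK⟩ := exists_encl hcs hsupp hne
  set k := π / L with hk
  have hkpos : 0 < k := by positivity
  have hkL : k * L = π := by rw [hk]; field_simp
  set φ : ℝ → ℝ := fun x => Real.sin (x * k) with hφ
  set φ1 : ℝ → ℝ := fun x => Real.cos (x * k) * k with hφ1
  have hφd : ∀ x : ℝ, HasDerivAt φ (φ1 x) x := fun x => by
    have := (Real.hasDerivAt_sin (x * k)).comp x (hasDerivAt_mul_const k); exact this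
  have hφ1d : ∀ x : ℝ, HasDerivAt φ1 (-Real.sin (x * k) * k * k) x := fun x => by
    have := (((Real.hasDerivAt_cos (x * k)).comp x (hasDerivAt_mul_const k)).mul_const k :); exact this
  have hφpos : ∀ x ∈ Set.Icc c d, 0 < φ x := by
    intro x hx
    have hx0 : 0 < x := lt_of_lt_of_le hc hx.1
    have hxL : x < L := lt_of_le_of_lt hx.2 hdL
    apply Real.sin_pos_of_pos_of_lt_pi (by positivity)
    calc x * k < L * k := by exact mul_lt_mul_of_pos_right hxL hkpos
    _ = π := by rw [mul_comm]; exact hkL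
  have hgdiff : Differentiable ℝ g := hg.differentiable (by simp)
  have hgd : ∀ x : ℝ, HasDerivAt g (deriv g x) x := fun x => (hgdiff x).hasDerivAt
  have hg'cont : Continuous (deriv g) := (contDiff_infty_iff_deriv.1 hg).2.continuous
  set h1 : ℝ → ℝ := fun x => (deriv g x * φ x - g x * φ1 x) / (φ x) ^ 2 with hh1
  set Bf : ℝ → ℝ := fun x => φ x * φ1 x * (g x / φ x) ^ 2 with hBf
  set E : ℝ → ℝ := fun x =>
    (deriv g x) ^ 2 - k ^ 2 * (g x) ^ 2 - (φ x * h1 x) ^ 2 with hE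
  have key : ∀ x ∈ Set.uIcc c d, HasDerivAt Bf (E x) x := by
    intro x hx
    rw [Set.uIcc_of_le hcd.le] at hx
    have hφx : 0 < φ x := hφpos x hx
    have hdiv : HasDerivAt (fun y => g y / φ y) (h1 x) x := (hgd x).div (hφd x) hφx.ne'
    have hB := ((hφd x).mul (hφ1d x)).mul (hdiv.pow 2)
    convert (show HasDerivAt Bf _ x from hB) using 1
    rw [hE, hh1]
    simp only [Pi.mul_apply, Pi.pow_apply, Pi.add_apply, Pi.sub_apply]
    rw [show -Real.sin (x * k) = -φ x from rfl]
    field_simp [hφx.ne']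
    ring_nf
    field_simp
    ring
  have hφcont : Continuous φ := by fun_prop
  have hφ1cont : Continuous φ1 := by fun_prop
  have hEcont : ContinuousOn E (Set.Icc c d) := by
    have hφne : ∀ x ∈ Set.Icc c d, φ x ≠ 0 := fun x hx => (hφpos x hx).ne'
    have hh1cont : ContinuousOn h1 (Set.Icc c d) := by
      apply ContinuousOn.div
      · exact ((hg'cont.mul hφcont).sub ((hg.continuous.mul hφ1cont))).continuousOn
      · exact (hφcont.pow 2).continuousOn
      · intro x hx; exact pow_ne_zero 2 (hφne x hx)
    apply ContinuousOn.sub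
    apply ContinuousOn.sub
    · exact ((hg'cont.pow 2)).continuousOn
    · exact (continuous_const.mul (hg.continuous.pow 2)).continuousOn
    · exact ((hφcont.continuousOn.mul hh1cont).pow 2)
  have hEint : IntervalIntegrable E volume c d := by
    apply ContinuousOn.intervalIntegrable
    rwa [Set.uIcc_of_le hcd.le]
  have hgc : g c = 0 := image_eq_zero_of_notMem_tsupport (fun h => lt_irrefl c (hK h).1)
  have hgdz : g d = 0 := image_eq_zero_of_notMem_tsupport (fun h => lt_irrefl d (hK h).2)
  have hFTC : ∫ x in c..d, E x = 0 := by
    rw [intervalIntegral.integral_eq_sub_of_hasDerivAt key hEint]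
    rw [hBf]
    simp only
    rw [hgc, hgdz]
    simp
  have hInt1 : IntervalIntegrable (fun x => (deriv g x) ^ 2 - k ^ 2 * (g x) ^ 2) volume c d :=
    (((hg'cont.pow 2)).sub (continuous_const.mul (hg.continuous.pow 2))).intervalIntegrable c d
  have hmono : ∫ x in c..d, E x ≤ ∫ x in c..d, ((deriv g x) ^ 2 - k ^ 2 * (g x) ^ 2) := by
    apply intervalIntegral.integral_mono_on hcd.le hEint hInt1
    intro x hx
    rw [hE]
    simp only
    nlinarith [sq_nonneg (φ x * h1 x)]
  have hsplit : ∫ x in c..d, ((deriv g x) ^ 2 - k ^ 2 * (g x) ^ 2)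
      = (∫ x in c..d, (deriv g x) ^ 2) - k ^ 2 * ∫ x in c..d, (g x) ^ 2 := by
    rw [intervalIntegral.integral_sub (f := fun x => deriv g x ^ 2) (g := fun x => k ^ 2 * g x ^ 2) ((hg'cont.pow 2).intervalIntegrable c d)
      ((continuous_const.mul (hg.continuous.pow 2)).intervalIntegrable c d),
      intervalIntegral.integral_const_mul]
  have hsup1 : Function.support (fun x => (deriv g x) ^ 2) ⊆ Set.Ioc c d := by
    intro x hx
    have : deriv g x ≠ 0 := fun h => by simp [Function.mem_support, h] at hx
    have hx2 : x ∈ tsupport g := tsupport_deriv_subset' g (subset_tsupport _ this)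
    exact Set.Ioo_subset_Ioc_self (hK hx2)
  have hsup2 : Function.support (fun x => (g x) ^ 2) ⊆ Set.Ioc c d := by
    intro x hx
    have : g x ≠ 0 := fun h => by simp [Function.mem_support, h] at hx
    exact Set.Ioo_subset_Ioc_self (hK (subset_tsupport _ this))
  have he1 : ∫ x in c..d, (deriv g x) ^ 2 = ∫ x, (deriv g x) ^ 2 :=
    intervalIntegral.integral_eq_integral_of_support_subset hsup1
  have he2 : ∫ x in c..d, (g x) ^ 2 = ∫ x, (g x) ^ 2 :=
    intervalIntegral.integral_eq_integral_of_support_subset hsup2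
  have hk2 : k ^ 2 = (π / L) ^ 2 := by rw [hk]
  nlinarith [hmono, hFTC]


set_option maxHeartbeats 2000000 in
lemma beam1D {L : ℝ} (hL : 0 < L)
    (hω : IsLeast {x : ℝ | 0 < x ∧ Real.cos x * Real.cosh x = 1} ω)
    {g : ℝ → ℝ} (hg : ContDiff ℝ (⊤ : ℕ∞) g)
    (hcs : HasCompactSupport g) (hsupp : tsupport g ⊆ Set.Ioo 0 L) :
    (ω / L) ^ 4 * ∫ x, (g x) ^ 2 ≤ ∫ x, (deriv (deriv g) x) ^ 2 := by
  rcases Set.eq_empty_or_nonempty (tsupport g) with hemp | hne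
  · have hg0 : g = fun _ => 0 := by
      funext x
      exact image_eq_zero_of_notMem_tsupport (by simp [hemp])
    rw [hg0]
    simp
  obtain ⟨c, d, hc, hcd, hdL, hK⟩ := exists_encl hcs hsupp hne
  have hωpos : 0 < ω := hω.1.1
  set k := ω / L with hk
  have hkpos : 0 < k := by positivity
  have hkL : L * k = ω := by rw [hk]; field_simp
  set φ : ℝ → ℝ := fun x => FF ω (x * k) with hφ
  set φ1 : ℝ → ℝ := fun x => FF1 ω (x * k) * k with hφ1
  set φ2 : ℝ → ℝ := fun x => FF2 ω (x * k) * k * k with hφ2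
  set φ3 : ℝ → ℝ := fun x => FF3 ω (x * k) * k * k * k with hφ3
  have hφd : ∀ x : ℝ, HasDerivAt φ (φ1 x) x := fun x => by
    have := (hasDerivAt_FF (ω := ω) (x * k)).comp x (hasDerivAt_mul_const k); exact this
  have hφ1d : ∀ x : ℝ, HasDerivAt φ1 (φ2 x) x := fun x => by
    have := ((hasDerivAt_FF1 (ω := ω) (x * k)).comp x (hasDerivAt_mul_const k)).mul_const k; exact this
  have hφ2d : ∀ x : ℝ, HasDerivAt φ2 (φ3 x) x := fun x => by
    have := (((hasDerivAt_FF2 (ω := ω) (x * k)).comp x (hasDerivAt_mul_const k)).mul_const k).mul_const k; exact this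
  have hφ3d : ∀ x : ℝ, HasDerivAt φ3 (FF ω (x * k) * k * k * k * k) x := fun x => by
    have := ((((hasDerivAt_FF3 (ω := ω) (x * k)).comp x
      (hasDerivAt_mul_const k)).mul_const k).mul_const k).mul_const k; exact this
  have hmem : ∀ x ∈ Set.Icc c d, x * k ∈ Set.Ioo 0 ω := by
    intro x hx
    have hx0 : 0 < x := lt_of_lt_of_le hc hx.1
    have hxL : x < L := lt_of_le_of_lt hx.2 hdL
    constructor
    · positivity
    · calc x * k < L * k := mul_lt_mul_of_pos_right hxL hkpos
      _ = ω := hkL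
  have hφpos : ∀ x ∈ Set.Icc c d, 0 < φ x := fun x hx => FF_pos hω (hmem x hx)
  have hqnn : ∀ x ∈ Set.Icc c d, 0 ≤ 2 * (φ1 x) ^ 2 - 4 * φ x * φ2 x := by
    intro x hx
    have hW : 0 ≤ WW ω (x * k) := WW_nonneg hω (Set.Ioo_subset_Icc_self (hmem x hx))
    have : 2 * (φ1 x) ^ 2 - 4 * φ x * φ2 x = 2 * k ^ 2 * WW ω (x * k) := by
      simp only [hφ, hφ1, hφ2, WW]
      ring
    rw [this]
    positivity
  have hgdiff : Differentiable ℝ g := hg.differentiable (by simp)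
  have hg'smooth : ContDiff ℝ (⊤ : ℕ∞) (deriv g) := (contDiff_infty_iff_deriv.1 hg).2
  have hg'diff : Differentiable ℝ (deriv g) := hg'smooth.differentiable (by simp)
  have hgd : ∀ x : ℝ, HasDerivAt g (deriv g x) x := fun x => (hgdiff x).hasDerivAt
  have hg'd : ∀ x : ℝ, HasDerivAt (deriv g) (deriv (deriv g) x) x := fun x =>
    (hg'diff x).hasDerivAt
  have hg'cont : Continuous (deriv g) := hg'smooth.continuous
  have hg''cont : Continuous (deriv (deriv g)) := (contDiff_infty_iff_deriv.1 hg'smooth).2.continuous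
  set h0 : ℝ → ℝ := fun x => g x / φ x with hh0
  set h1 : ℝ → ℝ := fun x => (deriv g x * φ x - g x * φ1 x) / φ x ^ 2 with hh1
  set h2 : ℝ → ℝ := fun x =>
    ((deriv (deriv g) x * φ x + deriv g x * φ1 x - (deriv g x * φ1 x + g x * φ2 x)) * φ x ^ 2
      - (deriv g x * φ x - g x * φ1 x) * (2 * φ x * φ1 x)) / (φ x ^ 2) ^ 2 with hh2
  set Bf : ℝ → ℝ := fun x =>
    2 * φ1 x * φ2 x * h0 x ^ 2 + 2 * φ x * φ1 x * h1 x ^ 2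
      + 2 * φ x * φ2 x * (h0 x * h1 x) - (φ1 x * φ2 x + φ x * φ3 x) * h0 x ^ 2 with hBf
  set E : ℝ → ℝ := fun x =>
    (deriv (deriv g) x) ^ 2 - k ^ 4 * (g x) ^ 2
      - (φ x ^ 2 * h2 x ^ 2 + (2 * (φ1 x) ^ 2 - 4 * φ x * φ2 x) * h1 x ^ 2) with hE
  have key : ∀ x ∈ Set.uIcc c d, HasDerivAt Bf (E x) x := by
    intro x hx
    rw [Set.uIcc_of_le hcd.le] at hx
    have hφx : 0 < φ x := hφpos x hx
    have hh0d : HasDerivAt h0 (h1 x) x := (hgd x).div (hφd x) hφx.ne'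
    have hD : HasDerivAt (fun y => φ y ^ 2) (2 * φ x * φ1 x) x := by
      have := (hφd x).pow 2
      simpa [mul_comm, mul_assoc] using (show HasDerivAt (fun y => φ y ^ 2) _ x from this)
    have hN : HasDerivAt (fun y => deriv g y * φ y - g y * φ1 y)
        (deriv (deriv g) x * φ x + deriv g x * φ1 x - (deriv g x * φ1 x + g x * φ2 x)) x :=
      ((hg'd x).mul (hφd x)).sub ((hgd x).mul (hφ1d x))
    have hh1d : HasDerivAt h1 (h2 x) x := hN.div hD (by positivity)
    have t1 := (((hφ1d x).const_mul 2).mul (hφ2d x)).mul (hh0d.pow 2)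
    have t2 := (((hφd x).const_mul 2).mul (hφ1d x)).mul (hh1d.pow 2)
    have t3 := (((hφd x).const_mul 2).mul (hφ2d x)).mul (hh0d.mul hh1d)
    have t4 := (((hφ1d x).mul (hφ2d x)).add ((hφd x).mul (hφ3d x))).mul (hh0d.pow 2)
    have hB := ((t1.add t2).add t3).sub t4
    convert (show HasDerivAt Bf _ x from hB) using 1
    rw [hE, hh2, hh1, hh0]
    simp only [Pi.mul_apply, Pi.pow_apply, Pi.add_apply, Pi.sub_apply]
    rw [show FF ω (x * k) = φ x from rfl]
    field_simp [hφx.ne']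
    ring_nf
    field_simp
    ring
  have hφcont : Continuous φ := continuous_FF.comp (continuous_mul_right k)
  have hφ1cont : Continuous φ1 := (continuous_FF1.comp (continuous_mul_right k)).mul continuous_const
  have hφ2cont : Continuous φ2 :=
    ((continuous_FF2.comp (continuous_mul_right k)).mul continuous_const).mul continuous_const
  have hφ3cont : Continuous φ3 :=
    (((continuous_FF3.comp (continuous_mul_right k)).mul continuous_const).mul
      continuous_const).mul continuous_const
  have hφne : ∀ x ∈ Set.Icc c d, φ x ≠ 0 := fun x hx => (hφpos x hx).ne'
  have hh1cont : ContinuousOn h1 (Set.Icc c d) := by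
    apply ContinuousOn.div
    · exact ((hg'cont.mul hφcont).sub (hg.continuous.mul hφ1cont)).continuousOn
    · exact (hφcont.pow 2).continuousOn
    · intro x hx; exact pow_ne_zero 2 (hφne x hx)
  have hh2cont : ContinuousOn h2 (Set.Icc c d) := by
    apply ContinuousOn.div
    · apply ContinuousOn.sub
      · exact (((hg''cont.mul hφcont).add (hg'cont.mul hφ1cont)).sub
          ((hg'cont.mul hφ1cont).add (hg.continuous.mul hφ2cont))).continuousOn.mul
          ((hφcont.pow 2).continuousOn)
      · exact (((hg'cont.mul hφcont).sub (hg.continuous.mul hφ1cont)).mul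
          ((continuous_const.mul hφcont).mul hφ1cont)).continuousOn
    · exact ((hφcont.pow 2).pow 2).continuousOn
    · intro x hx; exact pow_ne_zero 2 (pow_ne_zero 2 (hφne x hx))
  have hEcont : ContinuousOn E (Set.Icc c d) := by
    apply ContinuousOn.sub
    · exact ((hg''cont.pow 2).sub (continuous_const.mul (hg.continuous.pow 2))).continuousOn
    · apply ContinuousOn.add
      · exact ((hφcont.pow 2).continuousOn).mul (hh2cont.pow 2)
      · exact (((continuous_const.mul (hφ1cont.pow 2)).sub
          ((continuous_const.mul hφcont).mul hφ2cont)).continuousOn).mul (hh1cont.pow 2)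
  have hEint : IntervalIntegrable E volume c d := by
    apply ContinuousOn.intervalIntegrable
    rwa [Set.uIcc_of_le hcd.le]
  have hgc : g c = 0 := image_eq_zero_of_notMem_tsupport (fun h => lt_irrefl c (hK h).1)
  have hgdz : g d = 0 := image_eq_zero_of_notMem_tsupport (fun h => lt_irrefl d (hK h).2)
  have hg'c : deriv g c = 0 := image_eq_zero_of_notMem_tsupport
    (fun h => lt_irrefl c (hK (tsupport_deriv_subset' g h)).1)
  have hg'dz : deriv g d = 0 := image_eq_zero_of_notMem_tsupport
    (fun h => lt_irrefl d (hK (tsupport_deriv_subset' g h)).2)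
  have hFTC : ∫ x in c..d, E x = 0 := by
    rw [intervalIntegral.integral_eq_sub_of_hasDerivAt key hEint]
    rw [hBf, hh0, hh1]
    simp only
    rw [hgc, hgdz, hg'c, hg'dz]
    simp
  have hInt1 : IntervalIntegrable (fun x => (deriv (deriv g) x) ^ 2 - k ^ 4 * (g x) ^ 2)
      volume c d :=
    ((hg''cont.pow 2).sub (continuous_const.mul (hg.continuous.pow 2))).intervalIntegrable c d
  have hmono : ∫ x in c..d, E x
      ≤ ∫ x in c..d, ((deriv (deriv g) x) ^ 2 - k ^ 4 * (g x) ^ 2) := by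
    apply intervalIntegral.integral_mono_on hcd.le hEint hInt1
    intro x hx
    rw [hE]
    simp only
    have h1nn : 0 ≤ (2 * (φ1 x) ^ 2 - 4 * φ x * φ2 x) * h1 x ^ 2 :=
      mul_nonneg (hqnn x hx) (sq_nonneg _)
    nlinarith [sq_nonneg (φ x * h2 x), sq_nonneg (φ x), sq_nonneg (h2 x),
      mul_nonneg (sq_nonneg (φ x)) (sq_nonneg (h2 x))]
  have hsplit : ∫ x in c..d, ((deriv (deriv g) x) ^ 2 - k ^ 4 * (g x) ^ 2)
      = (∫ x in c..d, (deriv (deriv g) x) ^ 2) - k ^ 4 * ∫ x in c..d, (g x) ^ 2 := by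
    rw [intervalIntegral.integral_sub (f := fun x => deriv (deriv g) x ^ 2) (g := fun x => k ^ 4 * g x ^ 2) ((hg''cont.pow 2).intervalIntegrable c d)
      ((continuous_const.mul (hg.continuous.pow 2)).intervalIntegrable c d),
      intervalIntegral.integral_const_mul]
  have hsup1 : Function.support (fun x => (deriv (deriv g) x) ^ 2) ⊆ Set.Ioc c d := by
    intro x hx
    have h : deriv (deriv g) x ≠ 0 := fun h => by simp [Function.mem_support, h] at hx
    have hx2 : x ∈ tsupport g :=
      tsupport_deriv_subset' g (tsupport_deriv_subset' (deriv g) (subset_tsupport _ h))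
    exact Set.Ioo_subset_Ioc_self (hK hx2)
  have hsup2 : Function.support (fun x => (g x) ^ 2) ⊆ Set.Ioc c d := by
    intro x hx
    have h : g x ≠ 0 := fun h => by simp [Function.mem_support, h] at hx
    exact Set.Ioo_subset_Ioc_self (hK (subset_tsupport _ h))
  have he1 : ∫ x in c..d, (deriv (deriv g) x) ^ 2 = ∫ x, (deriv (deriv g) x) ^ 2 :=
    intervalIntegral.integral_eq_integral_of_support_subset hsup1
  have he2 : ∫ x in c..d, (g x) ^ 2 = ∫ x, (g x) ^ 2 :=
    intervalIntegral.integral_eq_integral_of_support_subset hsup2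
  have h0 : (0:ℝ) ≤ ∫ x in c..d, ((deriv (deriv g) x) ^ 2 - k ^ 4 * (g x) ^ 2) := by
    rw [← hFTC]; exact hmono
  rw [hsplit, he1, he2] at h0
  have hk4 : (ω / L) ^ 4 = k ^ 4 := by rw [hk]
  rw [hk4]
  linarith


lemma pd_contDiff {u : ℝ × ℝ → ℝ} (hu : ContDiff ℝ (⊤ : ℕ∞) u) (v : ℝ × ℝ) :
    ContDiff ℝ (⊤ : ℕ∞) (pd v u) := by
  have h1 : ContDiff ℝ (⊤ : ℕ∞) (fderiv ℝ u) := hu.fderiv_right (by exact_mod_cast le_top)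
  exact h1.clm_apply contDiff_const

lemma pd_eq_zero {u : ℝ × ℝ → ℝ} {p : ℝ × ℝ} (hp : p ∉ tsupport u) (v : ℝ × ℝ) :
    pd v u p = 0 := by
  unfold pd
  rw [fderiv_of_notMem_tsupport (𝕜 := ℝ) hp]
  rfl

lemma tsupport_pd_subset (u : ℝ × ℝ → ℝ) (v : ℝ × ℝ) : tsupport (pd v u) ⊆ tsupport u := by
  apply closure_minimal _ (isClosed_tsupport u)
  intro p hp
  by_contra h
  exact hp (pd_eq_zero h v)

lemma pd_hasCompactSupport {u : ℝ × ℝ → ℝ} (hcs : HasCompactSupport u) (v : ℝ × ℝ) :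
    HasCompactSupport (pd v u) :=
  hcs.mono' ((subset_tsupport _).trans (tsupport_pd_subset u v))

/-- Schwarz symmetry of second partial derivatives. -/
lemma pd_comm {u : ℝ × ℝ → ℝ} (hu : ContDiff ℝ (⊤ : ℕ∞) u) (v w : ℝ × ℝ) :
    pd v (pd w u) = pd w (pd v u) := by
  funext p
  have hD : ContDiff ℝ (⊤ : ℕ∞) (fderiv ℝ u) := hu.fderiv_right (by exact_mod_cast le_top)
  have hder : ∀ y, HasFDerivAt u (fderiv ℝ u y) y := fun y =>
    ((hu.differentiable (by simp)) y).hasFDerivAt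
  have hDp : DifferentiableAt ℝ (fderiv ℝ u) p :=
    (hD.differentiable (by simp)) p
  have hsym := second_derivative_symmetric hder hDp.hasFDerivAt
  have key : ∀ z : ℝ × ℝ, pd z u = fun q => (fderiv ℝ u q) z := fun z => rfl
  have happ : ∀ z z' : ℝ × ℝ, pd z' (pd z u) p = (fderiv ℝ (fderiv ℝ u) p z') z := by
    intro z z'
    show fderiv ℝ (fun q => (fderiv ℝ u q) z) p z' = _
    rw [fderiv_clm_apply hDp (differentiableAt_const z)]
    simp
  rw [happ w v, happ v w, hsym]

/-- Integral of the derivative of a compactly supported `C¹` function vanishes. -/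
lemma integral_deriv_eq_zero' {f : ℝ → ℝ} (hf : Differentiable ℝ f)
    (hcont : Continuous (deriv f)) (hcs : HasCompactSupport f) :
    ∫ x, deriv f x = 0 := by
  rcases Set.eq_empty_or_nonempty (tsupport f) with hemp | hne
  · have : ∀ x, deriv f x = 0 := by
      intro x
      have : f = fun _ => 0 := funext fun x => image_eq_zero_of_notMem_tsupport (by simp [hemp])
      rw [this]
      simp
    simp [this]
  set K := tsupport f with hK
  have hKc : IsCompact K := hcs
  set c := sInf K - 1 with hc
  set d := sSup K + 1 with hd
  have hsub : K ⊆ Set.Ioo c d := by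
    intro x hx
    exact ⟨by have := csInf_le hKc.bddBelow hx; linarith,
      by have := le_csSup hKc.bddAbove hx; linarith⟩
  have hcd : c ≤ d := by
    obtain ⟨x, hx⟩ := hne
    have h1 := csInf_le hKc.bddBelow hx
    have h2 := le_csSup hKc.bddAbove hx
    rw [hc, hd]; linarith
  have hsupd : Function.support (deriv f) ⊆ Set.Ioc c d := fun x hx =>
    Set.Ioo_subset_Ioc_self (hsub (closure_minimal support_deriv_subset (isClosed_tsupport f)
      (subset_tsupport _ hx)))
  rw [← intervalIntegral.integral_eq_integral_of_support_subset hsupd]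
  rw [intervalIntegral.integral_eq_sub_of_hasDerivAt
    (fun x _ => (hf x).hasDerivAt) (hcont.intervalIntegrable c d)]
  have hfc : f c = 0 := image_eq_zero_of_notMem_tsupport (fun h => lt_irrefl c (hsub h).1)
  have hfd : f d = 0 := image_eq_zero_of_notMem_tsupport (fun h => lt_irrefl d (hsub h).2)
  rw [hfc, hfd, sub_zero]

/-- 1D integration by parts for compactly supported smooth functions. -/
lemma parts1D {f m : ℝ → ℝ} (hf : ContDiff ℝ (⊤ : ℕ∞) f) (hm : ContDiff ℝ (⊤ : ℕ∞) m)
    (hcs : HasCompactSupport f) :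
    ∫ x, deriv f x * m x = - ∫ x, f x * deriv m x := by
  have hfd : Differentiable ℝ f := hf.differentiable (by simp)
  have hmd : Differentiable ℝ m := hm.differentiable (by simp)
  have hf' : Continuous (deriv f) := (contDiff_infty_iff_deriv.1 hf).2.continuous
  have hm' : Continuous (deriv m) := (contDiff_infty_iff_deriv.1 hm).2.continuous
  have hP : HasCompactSupport (fun x => f x * m x) := by
    apply hcs.mono'
    intro x hx
    have : f x ≠ 0 := fun h => by simp [Function.mem_support, h] at hx
    exact subset_tsupport _ this
  have hPd : Differentiable ℝ (fun x => f x * m x) := hfd.mul hmd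
  have hder : deriv (fun x => f x * m x) = fun x => deriv f x * m x + f x * deriv m x := by
    funext x
    exact ((hfd x).hasDerivAt.mul (hmd x).hasDerivAt).deriv
  have hzero : ∫ x, (deriv f x * m x + f x * deriv m x) = 0 := by
    rw [← hder]
    apply integral_deriv_eq_zero' hPd _ hP
    rw [hder]
    exact (hf'.mul hm.continuous).add (hf.continuous.mul hm')
  have hint1 : Integrable (fun x => deriv f x * m x) := by
    apply Continuous.integrable_of_hasCompactSupport (hf'.mul hm.continuous)
    apply (hcs.deriv).mono'
    intro x hx
    have : deriv f x ≠ 0 := fun h => by simp [Function.mem_support, h] at hx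
    exact subset_tsupport _ this
  have hint2 : Integrable (fun x => f x * deriv m x) := by
    apply Continuous.integrable_of_hasCompactSupport (hf.continuous.mul hm')
    apply hcs.mono'
    intro x hx
    have : f x ≠ 0 := fun h => by simp [Function.mem_support, h] at hx
    exact subset_tsupport _ this
  rw [integral_add hint1 hint2] at hzero
  linarith

section Slices

variable {u : ℝ × ℝ → ℝ}

lemma contDiff_sliceX (hu : ContDiff ℝ (⊤ : ℕ∞) u) (y : ℝ) :
    ContDiff ℝ (⊤ : ℕ∞) (fun x => u (x, y)) :=
  hu.comp (contDiff_id.prodMk contDiff_const)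

lemma contDiff_sliceY (hu : ContDiff ℝ (⊤ : ℕ∞) u) (x : ℝ) :
    ContDiff ℝ (⊤ : ℕ∞) (fun y => u (x, y)) :=
  hu.comp (contDiff_const.prodMk contDiff_id)

lemma hasDerivAt_sliceX (hu : ContDiff ℝ (⊤ : ℕ∞) u) (x y : ℝ) :
    HasDerivAt (fun t => u (t, y)) (pd (1, 0) u (x, y)) x := by
  have hline : HasDerivAt (fun t : ℝ => (t, y)) ((1 : ℝ), (0 : ℝ)) x :=
    (hasDerivAt_id x).prodMk (hasDerivAt_const x y)
  exact (((hu.differentiable (by simp)) (x, y)).hasFDerivAt).comp_hasDerivAt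
    x hline

lemma hasDerivAt_sliceY (hu : ContDiff ℝ (⊤ : ℕ∞) u) (x y : ℝ) :
    HasDerivAt (fun t => u (x, t)) (pd (0, 1) u (x, y)) y := by
  have hline : HasDerivAt (fun t : ℝ => (x, t)) ((0 : ℝ), (1 : ℝ)) y :=
    (hasDerivAt_const y x).prodMk (hasDerivAt_id y)
  exact (((hu.differentiable (by simp)) (x, y)).hasFDerivAt).comp_hasDerivAt
    y hline

lemma deriv_sliceX (hu : ContDiff ℝ (⊤ : ℕ∞) u) (y : ℝ) :
    deriv (fun t => u (t, y)) = fun x => pd (1, 0) u (x, y) :=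
  funext fun x => (hasDerivAt_sliceX hu x y).deriv

lemma deriv_sliceY (hu : ContDiff ℝ (⊤ : ℕ∞) u) (x : ℝ) :
    deriv (fun t => u (x, t)) = fun y => pd (0, 1) u (x, y) :=
  funext fun y => (hasDerivAt_sliceY hu x y).deriv

lemma sliceX_hasCompactSupport (hcs : HasCompactSupport u) (y : ℝ) :
    HasCompactSupport (fun x => u (x, y)) := by
  have hcl : IsClosed {x : ℝ | (x, y) ∈ tsupport u} :=
    (isClosed_tsupport u).preimage (Continuous.prodMk_left y)
  have h1 : tsupport (fun x => u (x, y)) ⊆ {x : ℝ | (x, y) ∈ tsupport u} :=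
    closure_minimal (fun x hx => subset_tsupport u hx) hcl
  apply IsCompact.of_isClosed_subset (hcs.image continuous_fst) (isClosed_tsupport _)
  intro x hx
  exact ⟨(x, y), h1 hx, rfl⟩

lemma sliceY_hasCompactSupport (hcs : HasCompactSupport u) (x : ℝ) :
    HasCompactSupport (fun y => u (x, y)) := by
  have hcl : IsClosed {y : ℝ | (x, y) ∈ tsupport u} :=
    (isClosed_tsupport u).preimage (Continuous.prodMk_right x)
  have h1 : tsupport (fun y => u (x, y)) ⊆ {y : ℝ | (x, y) ∈ tsupport u} :=
    closure_minimal (fun y hy => subset_tsupport u hy) hcl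
  apply IsCompact.of_isClosed_subset (hcs.image continuous_snd) (isClosed_tsupport _)
  intro y hy
  exact ⟨(x, y), h1 hy, rfl⟩

lemma sliceX_tsupport_subset {s t : Set ℝ} (hsupp : tsupport u ⊆ s ×ˢ t) (y : ℝ) :
    tsupport (fun x => u (x, y)) ⊆ s := by
  have hcl : IsClosed {x : ℝ | (x, y) ∈ tsupport u} :=
    (isClosed_tsupport u).preimage (Continuous.prodMk_left y)
  have h1 : tsupport (fun x => u (x, y)) ⊆ {x : ℝ | (x, y) ∈ tsupport u} :=
    closure_minimal (fun x hx => subset_tsupport u hx) hcl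
  exact fun x hx => (hsupp (h1 hx)).1

lemma sliceY_tsupport_subset {s t : Set ℝ} (hsupp : tsupport u ⊆ s ×ˢ t) (x : ℝ) :
    tsupport (fun y => u (x, y)) ⊆ t := by
  have hcl : IsClosed {y : ℝ | (x, y) ∈ tsupport u} :=
    (isClosed_tsupport u).preimage (Continuous.prodMk_right x)
  have h1 : tsupport (fun y => u (x, y)) ⊆ {y : ℝ | (x, y) ∈ tsupport u} :=
    closure_minimal (fun y hy => subset_tsupport u hy) hcl
  exact fun y hy => (hsupp (h1 hy)).2

end Slices


lemma integrable2D {f : ℝ × ℝ → ℝ} (hf : Continuous f) (hcs : HasCompactSupport f) :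
    Integrable f (volume : Measure (ℝ × ℝ)) :=
  hf.integrable_of_hasCompactSupport hcs

lemma sq_hasCompactSupport {α : Type*} [TopologicalSpace α] {f : α → ℝ}
    (hcs : HasCompactSupport f) : HasCompactSupport (fun x => (f x) ^ 2) := by
  apply hcs.mono'
  intro x hx
  have : f x ≠ 0 := fun h => by simp [Function.mem_support, h] at hx
  exact subset_tsupport _ this

lemma mul_hasCompactSupport {α : Type*} [TopologicalSpace α] {f g : α → ℝ}
    (hcs : HasCompactSupport f) : HasCompactSupport (fun x => f x * g x) := by
  apply hcs.mono'
  intro x hx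
  have : f x ≠ 0 := fun h => by simp [Function.mem_support, h] at hx
  exact subset_tsupport _ this

lemma fubX {F : ℝ × ℝ → ℝ} (hF : Integrable F (volume : Measure (ℝ × ℝ))) :
    ∫ p, F p = ∫ x, ∫ y, F (x, y) := by
  rw [MeasureTheory.Measure.volume_eq_prod] at hF ⊢
  exact integral_prod F hF

lemma fubY {F : ℝ × ℝ → ℝ} (hF : Integrable F (volume : Measure (ℝ × ℝ))) :
    ∫ p, F p = ∫ y, ∫ x, F (x, y) := by
  rw [MeasureTheory.Measure.volume_eq_prod] at hF ⊢
  exact integral_prod_symm F hF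

/-- Fubini-type lower bound from slicewise (in `x`) inequalities. -/
lemma keyX {w W : ℝ × ℝ → ℝ} (hw : Continuous w) (hW : Continuous W)
    (hwcs : HasCompactSupport w) (hWcs : HasCompactSupport W) (C : ℝ)
    (hslice : ∀ y : ℝ, C * ∫ x, (w (x, y)) ^ 2 ≤ ∫ x, (W (x, y)) ^ 2) :
    C * ∫ p, (w p) ^ 2 ≤ ∫ p, (W p) ^ 2 := by
  have hw2 : Integrable (fun p => (w p) ^ 2) (volume : Measure (ℝ × ℝ)) :=
    integrable2D (hw.pow 2) (sq_hasCompactSupport hwcs)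
  have hW2 : Integrable (fun p => (W p) ^ 2) (volume : Measure (ℝ × ℝ)) :=
    integrable2D (hW.pow 2) (sq_hasCompactSupport hWcs)
  have hf : Integrable (fun p => (W p) ^ 2 - C * (w p) ^ 2) (volume : Measure (ℝ × ℝ)) :=
    hW2.sub (hw2.const_mul C)
  have h1 : (0 : ℝ) ≤ ∫ p, ((W p) ^ 2 - C * (w p) ^ 2) := by
    rw [fubY hf]
    apply integral_nonneg
    intro y
    simp only [Pi.zero_apply]
    have hws : Integrable (fun x => (w (x, y)) ^ 2) := by
      apply Continuous.integrable_of_hasCompactSupport (by fun_prop)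
      exact sq_hasCompactSupport (sliceX_hasCompactSupport hwcs y)
    have hWs : Integrable (fun x => (W (x, y)) ^ 2) := by
      apply Continuous.integrable_of_hasCompactSupport (by fun_prop)
      exact sq_hasCompactSupport (sliceX_hasCompactSupport hWcs y)
    have := hslice y
    rw [integral_sub hWs (hws.const_mul C), integral_const_mul]
    linarith
  rw [integral_sub hW2 (hw2.const_mul C), integral_const_mul] at h1
  linarith

/-- Fubini-type lower bound from slicewise (in `y`) inequalities. -/
lemma keyY {w W : ℝ × ℝ → ℝ} (hw : Continuous w) (hW : Continuous W)
    (hwcs : HasCompactSupport w) (hWcs : HasCompactSupport W) (C : ℝ)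
    (hslice : ∀ x : ℝ, C * ∫ y, (w (x, y)) ^ 2 ≤ ∫ y, (W (x, y)) ^ 2) :
    C * ∫ p, (w p) ^ 2 ≤ ∫ p, (W p) ^ 2 := by
  have hw2 : Integrable (fun p => (w p) ^ 2) (volume : Measure (ℝ × ℝ)) :=
    integrable2D (hw.pow 2) (sq_hasCompactSupport hwcs)
  have hW2 : Integrable (fun p => (W p) ^ 2) (volume : Measure (ℝ × ℝ)) :=
    integrable2D (hW.pow 2) (sq_hasCompactSupport hWcs)
  have hf : Integrable (fun p => (W p) ^ 2 - C * (w p) ^ 2) (volume : Measure (ℝ × ℝ)) :=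
    hW2.sub (hw2.const_mul C)
  have h1 : (0 : ℝ) ≤ ∫ p, ((W p) ^ 2 - C * (w p) ^ 2) := by
    rw [fubX hf]
    apply integral_nonneg
    intro x
    simp only [Pi.zero_apply]
    have hws : Integrable (fun y => (w (x, y)) ^ 2) := by
      apply Continuous.integrable_of_hasCompactSupport (by fun_prop)
      exact sq_hasCompactSupport (sliceY_hasCompactSupport hwcs x)
    have hWs : Integrable (fun y => (W (x, y)) ^ 2) := by
      apply Continuous.integrable_of_hasCompactSupport (by fun_prop)
      exact sq_hasCompactSupport (sliceY_hasCompactSupport hWcs x)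
    have := hslice x
    rw [integral_sub hWs (hws.const_mul C), integral_const_mul]
    linarith
  rw [integral_sub hW2 (hw2.const_mul C), integral_const_mul] at h1
  linarith

/-- 2D integration by parts: `∫ u_xx u_yy = ∫ u_xy²`. -/
lemma parts2D {u : ℝ × ℝ → ℝ} (hu : ContDiff ℝ (⊤ : ℕ∞) u) (hcs : HasCompactSupport u) :
    ∫ p, pd (1, 0) (pd (1, 0) u) p * pd (0, 1) (pd (0, 1) u) p
      = ∫ p, (pd (0, 1) (pd (1, 0) u) p) ^ 2 := by
  set v := pd (1, 0) u with hv
  set w2 := pd (0, 1) u with hw2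
  have hvsm : ContDiff ℝ (⊤ : ℕ∞) v := pd_contDiff hu _
  have hw2sm : ContDiff ℝ (⊤ : ℕ∞) w2 := pd_contDiff hu _
  have hvcs : HasCompactSupport v := pd_hasCompactSupport hcs _
  set uyy := pd (0, 1) w2 with huyy
  have huyysm : ContDiff ℝ (⊤ : ℕ∞) uyy := pd_contDiff hw2sm _
  set S := pd (0, 1) (pd (0, 1) v) with hS
  have hstep2 : pd (1, 0) uyy = S := by
    rw [huyy, pd_comm hw2sm, hw2, pd_comm hu, hS, hv]
  -- step 1 : per-y x-integration by parts
  have hstep1 : ∀ y : ℝ, ∫ x, pd (1, 0) v (x, y) * uyy (x, y)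
      = - ∫ x, v (x, y) * S (x, y) := by
    intro y
    have h1 := parts1D (contDiff_sliceX hvsm y) (contDiff_sliceX huyysm y)
      (sliceX_hasCompactSupport hvcs y)
    rw [deriv_sliceX hvsm y, deriv_sliceX huyysm y] at h1
    simp only at h1
    rw [h1, hstep2]
  -- step 3 : per-x y-integration by parts
  have hstep3 : ∀ x : ℝ, ∫ y, v (x, y) * S (x, y)
      = - ∫ y, (pd (0, 1) v (x, y)) ^ 2 := by
    intro x
    have h1 := parts1D (contDiff_sliceY hvsm x) (contDiff_sliceY (pd_contDiff hvsm (0, 1)) x)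
      (sliceY_hasCompactSupport hvcs x)
    rw [deriv_sliceY hvsm x, deriv_sliceY (pd_contDiff hvsm (0, 1)) x] at h1
    simp only at h1
    have h2 : ∫ y, pd (0, 1) v (x, y) * pd (0, 1) v (x, y)
        = ∫ y, (pd (0, 1) v (x, y)) ^ 2 := by
      congr 1
      funext y
      ring
    rw [h2] at h1
    rw [hS]
    linarith [h1]
  -- continuity and integrability
  have hvS : Continuous (fun p => v p * S p) :=
    hvsm.continuous.mul (pd_contDiff (pd_contDiff hvsm _) _).continuous
  have hvScs : HasCompactSupport (fun p => v p * S p) := mul_hasCompactSupport hvcs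
  have hvSint : Integrable (fun p => v p * S p) (volume : Measure (ℝ × ℝ)) :=
    integrable2D hvS hvScs
  have hprod : Continuous (fun p => pd (1, 0) v p * uyy p) :=
    (pd_contDiff hvsm _).continuous.mul huyysm.continuous
  have hprodcs : HasCompactSupport (fun p => pd (1, 0) v p * uyy p) :=
    mul_hasCompactSupport (pd_hasCompactSupport hvcs _)
  have hprodint : Integrable (fun p => pd (1, 0) v p * uyy p) (volume : Measure (ℝ × ℝ)) :=
    integrable2D hprod hprodcs
  have hsqint : Integrable (fun p => (pd (0, 1) v p) ^ 2) (volume : Measure (ℝ × ℝ)) :=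
    integrable2D ((pd_contDiff hvsm _).continuous.pow 2)
      (sq_hasCompactSupport (pd_hasCompactSupport hvcs _))
  calc ∫ p, pd (1, 0) v p * uyy p
      = ∫ y, ∫ x, pd (1, 0) v (x, y) * uyy (x, y) := fubY hprodint
    _ = ∫ y, - ∫ x, v (x, y) * S (x, y) := by
        congr 1
        funext y
        exact hstep1 y
    _ = - ∫ y, ∫ x, v (x, y) * S (x, y) := integral_neg _
    _ = - ∫ p, v p * S p := by rw [← fubY hvSint]
    _ = - ∫ x, ∫ y, v (x, y) * S (x, y) := by rw [fubX hvSint]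
    _ = - ∫ x, - ∫ y, (pd (0, 1) v (x, y)) ^ 2 := by
        congr 1
        congr 1
        funext x
        exact hstep3 x
    _ = ∫ x, ∫ y, (pd (0, 1) v (x, y)) ^ 2 := by rw [integral_neg]; ring_nf
    _ = ∫ p, (pd (0, 1) v p) ^ 2 := (fubX hsqint).symm



section Assembly

variable {a ω : ℝ} {u : ℝ × ℝ → ℝ}

/-- Main integral inequality. -/
lemma main_ineq (hω : IsLeast {x : ℝ | 0 < x ∧ Real.cos x * Real.cosh x = 1} ω)
    (ha : 1 ≤ a) (hu : ContDiff ℝ (⊤ : ℕ∞) u) (hcs : HasCompactSupport u)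
    (hsupp : tsupport u ⊆ Rect a) :
    (ω ^ 4 * (a ^ 4 + a ^ (-4 : ℤ)) + 2 * π ^ 4) * ∫ p, (u p) ^ 2 ≤ ∫ p, (lap u p) ^ 2 := by
  have ha0 : 0 < a := lt_of_lt_of_le one_pos ha
  have hia : 0 < 1 / a := by positivity
  have hsupp' : tsupport u ⊆ Set.Ioo 0 a ×ˢ Set.Ioo 0 (1 / a) := hsupp
  have hucont : Continuous u := hu.continuous
  have hxsm : ContDiff ℝ (⊤ : ℕ∞) (pd (1, 0) u) := pd_contDiff hu _
  have hysm : ContDiff ℝ (⊤ : ℕ∞) (pd (0, 1) u) := pd_contDiff hu _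
  have hxcs : HasCompactSupport (pd (1, 0) u) := pd_hasCompactSupport hcs _
  have hycs : HasCompactSupport (pd (0, 1) u) := pd_hasCompactSupport hcs _
  have huxxsm : ContDiff ℝ (⊤ : ℕ∞) (uxx u) := pd_contDiff hxsm _
  have huyysm : ContDiff ℝ (⊤ : ℕ∞) (uyy u) := pd_contDiff hysm _
  have huxysm : ContDiff ℝ (⊤ : ℕ∞) (uxy u) := pd_contDiff hxsm _
  have huxxcs : HasCompactSupport (uxx u) := pd_hasCompactSupport hxcs _
  have huyycs : HasCompactSupport (uyy u) := pd_hasCompactSupport hycs _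
  have huxycs : HasCompactSupport (uxy u) := pd_hasCompactSupport hxcs _
  -- estimate for uxx
  have est1 : (ω / a) ^ 4 * ∫ p, (u p) ^ 2 ≤ ∫ p, (uxx u p) ^ 2 := by
    apply keyX hucont huxxsm.continuous hcs huxxcs
    intro y
    have hb := beam1D ha0 hω (contDiff_sliceX hu y) (sliceX_hasCompactSupport hcs y)
      (sliceX_tsupport_subset hsupp' y)
    have hdd : deriv (deriv (fun t => u (t, y))) = fun x => uxx u (x, y) := by
      rw [deriv_sliceX hu y]
      exact deriv_sliceX hxsm y
    rwa [hdd] at hb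
  -- estimate for uyy
  have est2 : (ω / (1 / a)) ^ 4 * ∫ p, (u p) ^ 2 ≤ ∫ p, (uyy u p) ^ 2 := by
    apply keyY hucont huyysm.continuous hcs huyycs
    intro x
    have hb := beam1D hia hω (contDiff_sliceY hu x) (sliceY_hasCompactSupport hcs x)
      (sliceY_tsupport_subset hsupp' x)
    have hdd : deriv (deriv (fun t => u (x, t))) = fun y => uyy u (x, y) := by
      rw [deriv_sliceY hu x]
      exact deriv_sliceY hysm x
    rwa [hdd] at hb
  -- estimates for uxy
  have est3a : (π / (1 / a)) ^ 2 * ∫ p, (pd (1, 0) u p) ^ 2 ≤ ∫ p, (uxy u p) ^ 2 := by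
    apply keyY hxsm.continuous huxysm.continuous hxcs huxycs
    intro x
    have hb := poincare1D hia (contDiff_sliceY hxsm x) (sliceY_hasCompactSupport hxcs x)
      (sliceY_tsupport_subset ((tsupport_pd_subset u _).trans hsupp') x)
    have hdd : deriv (fun t => pd (1, 0) u (x, t)) = fun y => uxy u (x, y) :=
      deriv_sliceY hxsm x
    rwa [hdd] at hb
  have est3b : (π / a) ^ 2 * ∫ p, (u p) ^ 2 ≤ ∫ p, (pd (1, 0) u p) ^ 2 := by
    apply keyX hucont hxsm.continuous hcs hxcs
    intro y
    have hb := poincare1D ha0 (contDiff_sliceX hu y) (sliceX_hasCompactSupport hcs y)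
      (sliceX_tsupport_subset hsupp' y)
    have hdd : deriv (fun t => u (t, y)) = fun x => pd (1, 0) u (x, y) := deriv_sliceX hu y
    rwa [hdd] at hb
  -- cross estimate
  have hu2nn : 0 ≤ ∫ p, (u p) ^ 2 := integral_nonneg fun p => sq_nonneg _
  have hx2nn : 0 ≤ ∫ p, (pd (1, 0) u p) ^ 2 := integral_nonneg fun p => sq_nonneg _
  have est3 : π ^ 4 * ∫ p, (u p) ^ 2 ≤ ∫ p, (uxy u p) ^ 2 := by
    have h1 : (π / (1 / a)) ^ 2 * ((π / a) ^ 2 * ∫ p, (u p) ^ 2)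
        ≤ (π / (1 / a)) ^ 2 * ∫ p, (pd (1, 0) u p) ^ 2 :=
      mul_le_mul_of_nonneg_left est3b (by positivity)
    have h2 : (π / (1 / a)) ^ 2 * ((π / a) ^ 2 * ∫ p, (u p) ^ 2)
        = π ^ 4 * ∫ p, (u p) ^ 2 := by
      field_simp
    linarith
  -- expansion of the Laplacian square
  have hint_xx : Integrable (fun p => (uxx u p) ^ 2) (volume : Measure (ℝ × ℝ)) :=
    integrable2D (huxxsm.continuous.pow 2) (sq_hasCompactSupport huxxcs)
  have hint_yy : Integrable (fun p => (uyy u p) ^ 2) (volume : Measure (ℝ × ℝ)) :=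
    integrable2D (huyysm.continuous.pow 2) (sq_hasCompactSupport huyycs)
  have hint_cross : Integrable (fun p => uxx u p * uyy u p) (volume : Measure (ℝ × ℝ)) :=
    integrable2D (huxxsm.continuous.mul huyysm.continuous) (mul_hasCompactSupport huxxcs)
  have hexp : ∫ p, (lap u p) ^ 2 = (∫ p, (uxx u p) ^ 2)
      + (2 * ∫ p, uxx u p * uyy u p) + ∫ p, (uyy u p) ^ 2 := by
    have h1 : (fun p => (lap u p) ^ 2)
        = fun p => (uxx u p) ^ 2 + (2 * (uxx u p * uyy u p) + (uyy u p) ^ 2) := by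
      funext p
      simp only [lap]
      ring
    have hadd : Integrable (fun p => 2 * (uxx u p * uyy u p) + (uyy u p) ^ 2)
        (volume : Measure (ℝ × ℝ)) := (hint_cross.const_mul 2).add hint_yy
    have hc2 : Integrable (fun p => 2 * (uxx u p * uyy u p)) (volume : Measure (ℝ × ℝ)) :=
      hint_cross.const_mul 2
    rw [h1, integral_add hint_xx hadd, integral_add hc2 hint_yy, integral_const_mul]
    ring
  have hparts : ∫ p, uxx u p * uyy u p = ∫ p, (uxy u p) ^ 2 := parts2D hu hcs
  -- final arithmetic
  have harith : (ω / a) ^ 4 + (ω / (1 / a)) ^ 4 + 2 * π ^ 4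
      = ω ^ 4 * (a ^ 4 + a ^ (-4 : ℤ)) + 2 * π ^ 4 := by
    have hz : a ^ (-4 : ℤ) = (a ^ 4)⁻¹ := by
      rw [zpow_neg]
      norm_cast
    rw [hz]
    field_simp
    ring
  rw [hexp, hparts, ← harith]
  linarith
end Assembly


lemma denom_pos {u : ℝ × ℝ → ℝ} (hu : ContDiff ℝ (⊤ : ℕ∞) u) (hcs : HasCompactSupport u)
    (hne : u ≠ 0) : 0 < ∫ p, (u p) ^ 2 := by
  have hint : Integrable (fun p => (u p) ^ 2) (volume : Measure (ℝ × ℝ)) :=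
    integrable2D (hu.continuous.pow 2) (sq_hasCompactSupport hcs)
  rw [integral_pos_iff_support_of_nonneg_ae (Filter.Eventually.of_forall fun p => sq_nonneg _)
    hint]
  have hsupp_eq : Function.support (fun p => (u p) ^ 2) = Function.support u := by
    ext p
    simp [Function.mem_support, pow_eq_zero_iff]
  rw [hsupp_eq]
  rcases Function.ne_iff.1 hne with ⟨p, hp⟩
  exact hu.continuous.isOpen_support.measure_pos volume ⟨p, hp⟩


end BiharmLB

open BiharmLB in
/-- Simple explicit lower bound: `λ₁(a) ≥ ω₁⁴(a⁴ + a⁻⁴) + 2π⁴`, where `ω₁` is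
the smallest positive root of `cos ω · cosh ω = 1`. -/
theorem first_eigenvalue_explicit_lower_bound
    (ω : ℝ) (hω : IsLeast {x : ℝ | 0 < x ∧ Real.cos x * Real.cosh x = 1} ω)
    (a : ℝ) (ha : 1 ≤ a) :
    lam1 a ≥ ω ^ 4 * (a ^ 4 + a ^ (-4 : ℤ)) + 2 * π ^ 4 := by
  have ha0 : 0 < a := lt_of_lt_of_le one_pos ha
  rw [ge_iff_le, lam1]
  apply le_csInf
  · -- nonemptiness of the admissible set
    have hopen : IsOpen (Rect a) := isOpen_Ioo.prod isOpen_Ioo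
    have hmem : ((a / 2, 1 / (2 * a)) : ℝ × ℝ) ∈ Rect a := by
      constructor
      · exact ⟨by positivity, by linarith⟩
      · refine ⟨by positivity, ?_⟩
        rw [div_lt_div_iff₀ (by positivity) (by positivity)]
        nlinarith
    obtain ⟨f, hf1, hf2, hf3, _, hf5⟩ := exists_contDiff_tsupport_subset (n := ⊤) (hopen.mem_nhds hmem)
    refine ⟨_, f, ⟨hf3, hf2, hf1⟩, ?_, rfl⟩
    intro h
    rw [h] at hf5
    simp at hf5
  · rintro μ ⟨u, ⟨hu, hcs, hsupp⟩, hune, rfl⟩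
    have hD : 0 < ∫ p, (u p) ^ 2 := denom_pos hu hcs hune
    rw [le_div_iff₀ hD]
    exact main_ineq hω ha hu hcs hsupp
end
end

section
/- For every smooth function v compactly supported in the open interval (0,1), the clamped-beam inequality ∫₀¹ (v''(x))² dx ≥ ω₁⁴ ∫₀¹ v(x)² dx holds, where ω₁ is the smallest positive root of cos(ω)cosh(ω) = 1. -/
open MeasureTheory Real Filter

noncomputable section


/-- Admissible one-dimensional test functions: smooth, compactly supported in `(0,1)`. -/
def Adm1 (v : ℝ → ℝ) : Prop :=
  ContDiff ℝ (⊤ : ℕ∞) v ∧ HasCompactSupport v ∧ tsupport v ⊆ Set.Ioo 0 1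

/-- `ρ(α)`: first eigenvalue of `y'''' - 2αy'' = λy` on `(0,1)` with clamped
boundary conditions, characterized variationally. -/
def rho (α : ℝ) : ℝ :=
  sInf { r | ∃ v : ℝ → ℝ, Adm1 v ∧ (∫ x in (0:ℝ)..1, (v x) ^ 2) = 1 ∧
    r = (∫ x in (0:ℝ)..1, (deriv (deriv v) x) ^ 2) +
        2 * α * (∫ x in (0:ℝ)..1, (deriv v x) ^ 2) }

section ClampedBeamAux
open Set

/-- eigenfunction building blocks -/
def sg (σ t : ℝ) : ℝ := Real.cosh t - Real.cos t - σ * (Real.sinh t - Real.sin t)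
def sg1 (σ t : ℝ) : ℝ := Real.sinh t + Real.sin t - σ * (Real.cosh t - Real.cos t)
def sg2 (σ t : ℝ) : ℝ := Real.cosh t + Real.cos t - σ * (Real.sinh t + Real.sin t)
def sg3 (σ t : ℝ) : ℝ := Real.sinh t - Real.sin t - σ * (Real.cosh t + Real.cos t)

lemma hasDerivAt_sg (σ t : ℝ) : HasDerivAt (sg σ) (sg1 σ t) t := by
  have h := ((Real.hasDerivAt_cosh t).sub (Real.hasDerivAt_cos t)).sub
    (((Real.hasDerivAt_sinh t).sub (Real.hasDerivAt_sin t)).const_mul σ)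
  refine h.congr_deriv ?_
  all_goals (unfold sg1; ring)

lemma hasDerivAt_sg1 (σ t : ℝ) : HasDerivAt (sg1 σ) (sg2 σ t) t := by
  have h := ((Real.hasDerivAt_sinh t).add (Real.hasDerivAt_sin t)).sub
    (((Real.hasDerivAt_cosh t).sub (Real.hasDerivAt_cos t)).const_mul σ)
  refine h.congr_deriv ?_
  all_goals (unfold sg2; ring)

lemma hasDerivAt_sg2 (σ t : ℝ) : HasDerivAt (sg2 σ) (sg3 σ t) t := by
  have h := ((Real.hasDerivAt_cosh t).add (Real.hasDerivAt_cos t)).sub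
    (((Real.hasDerivAt_sinh t).add (Real.hasDerivAt_sin t)).const_mul σ)
  refine h.congr_deriv ?_
  all_goals (unfold sg3; ring)

lemma hasDerivAt_sg3 (σ t : ℝ) : HasDerivAt (sg3 σ) (sg σ t) t := by
  have h := ((Real.hasDerivAt_sinh t).sub (Real.hasDerivAt_sin t)).sub
    (((Real.hasDerivAt_cosh t).add (Real.hasDerivAt_cos t)).const_mul σ)
  refine h.congr_deriv ?_
  all_goals (unfold sg; ring)

lemma contDiff_sg (σ : ℝ) : ContDiff ℝ (⊤ : ℕ∞) (sg σ) := by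
  unfold sg
  exact (Real.contDiff_cosh.sub Real.contDiff_cos).sub
    (contDiff_const.mul (Real.contDiff_sinh.sub Real.contDiff_sin))

lemma continuous_sg (σ : ℝ) : Continuous (sg σ) := (contDiff_sg σ).continuous

lemma continuous_sg1 (σ : ℝ) : Continuous (sg1 σ) := by
  unfold sg1; continuity

lemma continuous_sg2 (σ : ℝ) : Continuous (sg2 σ) := by
  unfold sg2; continuity

lemma continuous_sg3 (σ : ℝ) : Continuous (sg3 σ) := by
  unfold sg3; continuity

/-- `cos t * cosh t < 1` on `(0, 3π/2]`. -/
lemma coscosh_lt_one_small {t : ℝ} (h0 : 0 < t) (h1 : t ≤ π + π / 2) :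
    Real.cos t * Real.cosh t < 1 := by
  rcases le_or_gt t (π / 2) with hle | hgt
  · -- derivative argument
    set g1 : ℝ → ℝ := fun x => Real.sin x * Real.cosh x - Real.cos x * Real.sinh x with hg1
    have hg1' : ∀ x, HasDerivAt g1 (2 * Real.sin x * Real.sinh x) x := by
      intro x
      have h := (((Real.hasDerivAt_sin x).mul (Real.hasDerivAt_cosh x)).sub
        ((Real.hasDerivAt_cos x).mul (Real.hasDerivAt_sinh x)))
      refine h.congr_deriv ?_; ring
    have hmono1 : StrictMonoOn g1 (Icc 0 (π/2)) := by
      apply strictMonoOn_of_deriv_pos (convex_Icc _ _)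
      · exact (Continuous.sub (Real.continuous_sin.mul Real.continuous_cosh)
          (Real.continuous_cos.mul Real.continuous_sinh)).continuousOn
      · intro x hx
        rw [interior_Icc] at hx
        rw [(hg1' x).deriv]
        have hs : 0 < Real.sin x := Real.sin_pos_of_pos_of_lt_pi hx.1 (by linarith [Real.pi_pos, hx.2])
        have hsh : 0 < Real.sinh x := Real.sinh_pos_iff.mpr hx.1
        positivity
    have hg1pos : ∀ x ∈ Ioc (0:ℝ) (π/2), 0 < g1 x := by
      intro x hx
      have := hmono1 (Set.left_mem_Icc.mpr (by positivity)) (⟨hx.1.le, hx.2⟩ : x ∈ Icc 0 (π/2)) hx.1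
      simpa [hg1] using this
    set g : ℝ → ℝ := fun x => 1 - Real.cos x * Real.cosh x with hg
    have hgd : ∀ x, HasDerivAt g (g1 x) x := by
      intro x
      have h := (hasDerivAt_const x (1:ℝ)).sub ((Real.hasDerivAt_cos x).mul (Real.hasDerivAt_cosh x))
      refine h.congr_deriv ?_; show _ = Real.sin x * Real.cosh x - Real.cos x * Real.sinh x; ring
    have hmono : StrictMonoOn g (Icc 0 (π/2)) := by
      apply strictMonoOn_of_deriv_pos (convex_Icc _ _)
      · exact (continuous_const.sub (Real.continuous_cos.mul Real.continuous_cosh)).continuousOn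
      · intro x hx
        rw [interior_Icc] at hx
        rw [(hgd x).deriv]
        exact hg1pos x ⟨hx.1, hx.2.le⟩
    have := hmono (Set.left_mem_Icc.mpr (by positivity)) (⟨h0.le, hle⟩ : t ∈ Icc 0 (π/2)) h0
    simp only [hg, Real.cos_zero, Real.cosh_zero, mul_one, sub_self] at this
    linarith
  · -- cos t ≤ 0
    have hc : Real.cos t ≤ 0 := Real.cos_nonpos_of_pi_div_two_le_of_le hgt.le (by linarith)
    have := Real.cosh_pos (x := t)
    nlinarith

lemma omega_bounds {ω : ℝ}
    (hω : IsLeast {x : ℝ | 0 < x ∧ Real.cos x * Real.cosh x = 1} ω) :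
    π + π / 2 < ω ∧ ω < 2 * π := by
  obtain ⟨⟨hpos, heq⟩, hlb⟩ := hω
  constructor
  · by_contra h
    push_neg at h
    exact absurd heq (ne_of_lt (coscosh_lt_one_small hpos h))
  · -- find a root in (3π/2, 2π)
    have hcont : ContinuousOn (fun t => Real.cos t * Real.cosh t) (Icc (π + π/2) (2*π)) :=
      (Real.continuous_cos.mul Real.continuous_cosh).continuousOn
    have hab : π + π/2 ≤ 2*π := by linarith [Real.pi_pos]
    have hfa : Real.cos (π + π/2) * Real.cosh (π + π/2) = 0 := by
      rw [add_comm, Real.cos_add_pi, Real.cos_pi_div_two]; ring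
    have hfb : (1:ℝ) < Real.cos (2*π) * Real.cosh (2*π) := by
      rw [Real.cos_two_pi, one_mul]
      exact Real.one_lt_cosh.mpr (by positivity)
    have h1 : (1:ℝ) ∈ Ioo (Real.cos (π + π/2) * Real.cosh (π + π/2))
        (Real.cos (2*π) * Real.cosh (2*π)) := by
      rw [hfa]; exact ⟨one_pos, hfb⟩
    obtain ⟨r, hr, hre⟩ := intermediate_value_Ioo hab hcont h1
    have : ω ≤ r := hlb ⟨by nlinarith [Real.pi_pos, hr.1], hre⟩
    linarith [hr.2]

/-- `cos t * cosh t < 1` for all `t ∈ (0, ω)`. -/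
lemma coscosh_lt_one {ω : ℝ}
    (hω : IsLeast {x : ℝ | 0 < x ∧ Real.cos x * Real.cosh x = 1} ω)
    {t : ℝ} (h0 : 0 < t) (h1 : t < ω) : Real.cos t * Real.cosh t < 1 := by
  rcases le_or_gt t (π + π/2) with hle | hgt
  · exact coscosh_lt_one_small h0 hle
  · by_contra h
    push_neg at h
    rcases eq_or_lt_of_le h with heq | hlt
    · exact absurd (hω.2 ⟨h0, heq.symm⟩) (not_le.mpr h1)
    · have hcont : ContinuousOn (fun x => Real.cos x * Real.cosh x) (Icc (π + π/2) t) :=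
        (Real.continuous_cos.mul Real.continuous_cosh).continuousOn
      have hfa : Real.cos (π + π/2) * Real.cosh (π + π/2) = 0 := by
        rw [add_comm, Real.cos_add_pi, Real.cos_pi_div_two]; ring
      have h1m : (1:ℝ) ∈ Ioo (Real.cos (π + π/2) * Real.cosh (π + π/2))
          (Real.cos t * Real.cosh t) := by rw [hfa]; exact ⟨one_pos, hlt⟩
      obtain ⟨r, hr, hre⟩ := intermediate_value_Ioo hgt.le hcont h1m
      have : ω ≤ r := hω.2 ⟨by nlinarith [Real.pi_pos, hr.1], hre⟩
      linarith [hr.2]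

section Part2
variable {ω : ℝ}

lemma omega_rel (hω : IsLeast {x : ℝ | 0 < x ∧ Real.cos x * Real.cosh x = 1} ω) :
    Real.sin ω * Real.cosh ω = -Real.sinh ω := by
  obtain ⟨h32, h2π⟩ := omega_bounds hω
  obtain ⟨⟨hpos, heq⟩, _⟩ := hω
  have hC := Real.cosh_pos (x := ω)
  have hS : 0 < Real.sinh ω := Real.sinh_pos_iff.mpr hpos
  have hsneg : Real.sin ω < 0 := by
    have h1 : 0 < ω - π := by linarith [Real.pi_pos]
    have h2 : ω - π < π := by linarith
    have h3 := Real.sin_pos_of_pos_of_lt_pi h1 h2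
    rw [Real.sin_sub_pi] at h3
    linarith
  have hssq : (Real.sin ω * Real.cosh ω + Real.sinh ω) *
      (Real.sin ω * Real.cosh ω - Real.sinh ω) = 0 := by
    have e1 := Real.sin_sq_add_cos_sq ω
    have e2 := Real.cosh_sq_sub_sinh_sq ω
    nlinarith [e1, e2, heq]
  rcases mul_eq_zero.mp hssq with h | h
  · linarith
  · nlinarith [mul_neg_of_neg_of_pos hsneg hC]

/-- The four key algebraic identities for `σ = (cosh ω - 1)/sinh ω`. -/
lemma sigma_rels (hω : IsLeast {x : ℝ | 0 < x ∧ Real.cos x * Real.cosh x = 1} ω) :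
    (Real.cosh ω - (Real.cosh ω - 1)/Real.sinh ω * Real.sinh ω = 1) ∧
    (Real.sinh ω - (Real.cosh ω - 1)/Real.sinh ω * Real.cosh ω = (Real.cosh ω - 1)/Real.sinh ω) ∧
    (Real.cos ω - (Real.cosh ω - 1)/Real.sinh ω * Real.sin ω = 1) ∧
    (Real.sin ω + (Real.cosh ω - 1)/Real.sinh ω * Real.cos ω = -((Real.cosh ω - 1)/Real.sinh ω)) := by
  obtain ⟨hpos, heq⟩ := hω.1
  have hC := Real.cosh_pos (x := ω)
  have hS : 0 < Real.sinh ω := Real.sinh_pos_iff.mpr hpos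
  have hrel := omega_rel hω
  have hS2 : Real.sinh ω ^ 2 = Real.cosh ω ^ 2 - 1 := Real.sinh_sq ω
  set σ := (Real.cosh ω - 1)/Real.sinh ω with hσ
  have hσS : σ * Real.sinh ω = Real.cosh ω - 1 := by
    rw [hσ]; field_simp
  refine ⟨by linarith, ?_, ?_, ?_⟩
  · have h2' : (Real.sinh ω - σ * Real.cosh ω - σ) * Real.sinh ω = 0 := by
      linear_combination hS2 + (-Real.cosh ω - 1) * hσS
    have := (mul_eq_zero.mp h2').resolve_right hS.ne'
    linarith
  · have h3' : (Real.cos ω - σ * Real.sin ω - 1) * (Real.sinh ω * Real.cosh ω) = 0 := by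
      linear_combination Real.sinh ω * heq + (-Real.sin ω * Real.cosh ω) * hσS +
        (1 - Real.cosh ω) * hrel
    have := (mul_eq_zero.mp h3').resolve_right (mul_pos hS hC).ne'
    linarith
  · have h4' : (Real.sin ω + σ * Real.cos ω + σ) * (Real.sinh ω * Real.cosh ω) = 0 := by
      linear_combination Real.sinh ω * hrel +
        (Real.cos ω * Real.cosh ω + Real.cosh ω) * hσS + (Real.cosh ω - 1) * heq - hS2
    have := (mul_eq_zero.mp h4').resolve_right (mul_pos hS hC).ne'
    linarith
end Part2

section Symm
variable {ω σ : ℝ}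
  (H1 : Real.cosh ω - σ * Real.sinh ω = 1)
  (H2 : Real.sinh ω - σ * Real.cosh ω = σ)
  (H3 : Real.cos ω - σ * Real.sin ω = 1)
  (H4 : Real.sin ω + σ * Real.cos ω = -σ)

include H1 H2 H3 H4 in
lemma sg_symm (t : ℝ) : sg σ (ω - t) = sg σ t := by
  unfold sg
  rw [Real.cosh_sub, Real.cos_sub, Real.sinh_sub, Real.sin_sub]
  linear_combination Real.cosh t * H1 - Real.sinh t * H2 - Real.cos t * H3 - Real.sin t * H4

include H1 H2 H3 H4 in
lemma sg1_symm (t : ℝ) : sg1 σ (ω - t) = -sg1 σ t := by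
  unfold sg1
  rw [Real.cosh_sub, Real.cos_sub, Real.sinh_sub, Real.sin_sub]
  linear_combination Real.cosh t * H2 - Real.sinh t * H1 + Real.cos t * H4 - Real.sin t * H3

include H1 H2 H3 H4 in
lemma sg2_symm (t : ℝ) : sg2 σ (ω - t) = sg2 σ t := by
  unfold sg2
  rw [Real.cosh_sub, Real.cos_sub, Real.sinh_sub, Real.sin_sub]
  linear_combination Real.cosh t * H1 - Real.sinh t * H2 + Real.cos t * H3 + Real.sin t * H4

include H1 H2 H3 H4 in
lemma sg3_symm (t : ℝ) : sg3 σ (ω - t) = -sg3 σ t := by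
  unfold sg3
  rw [Real.cosh_sub, Real.cos_sub, Real.sinh_sub, Real.sin_sub]
  linear_combination Real.cosh t * H2 - Real.sinh t * H1 - Real.cos t * H4 + Real.sin t * H3
end Symm

lemma sinh_sub_sin_pos {t : ℝ} (h : 0 < t) : 0 < Real.sinh t - Real.sin t := by
  have h1 : Real.sin t < t := Real.sin_lt h
  have h2 : t < Real.sinh t := Real.self_lt_sinh_iff.mpr h
  linarith

/-- positivity of the eigenfunction on `(0, ω)`. -/
lemma sg_pos {ω : ℝ} (hω : IsLeast {x : ℝ | 0 < x ∧ Real.cos x * Real.cosh x = 1} ω)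
    {t : ℝ} (h0 : 0 < t) (h1 : t < ω) :
    0 < sg ((Real.cosh ω - 1)/Real.sinh ω) t := by
  obtain ⟨hpos, heq⟩ := hω.1
  have hC := Real.cosh_pos (x := ω)
  have hS : 0 < Real.sinh ω := Real.sinh_pos_iff.mpr hpos
  have hrel := omega_rel hω
  have hS2 : Real.sinh ω ^ 2 = Real.cosh ω ^ 2 - 1 := Real.sinh_sq ω
  set σ := (Real.cosh ω - 1)/Real.sinh ω with hσ
  set d : ℝ → ℝ := fun r => (Real.cosh r - Real.cos r)/(Real.sinh r - Real.sin r) with hd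
  have hden : ∀ r : ℝ, 0 < r → 0 < Real.sinh r - Real.sin r := fun r hr => sinh_sub_sin_pos hr
  have hdd : ∀ r : ℝ, 0 < r → r < ω → HasDerivAt d
      (((Real.sinh r + Real.sin r) * (Real.sinh r - Real.sin r) -
        (Real.cosh r - Real.cos r) * (Real.cosh r - Real.cos r)) /
        (Real.sinh r - Real.sin r)^2) r := by
    intro r hr _
    have hnum : HasDerivAt (fun x => Real.cosh x - Real.cos x) (Real.sinh r + Real.sin r) r := by
      have := (Real.hasDerivAt_cosh r).sub (Real.hasDerivAt_cos r)
      refine this.congr_deriv ?_; ring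
    have hde : HasDerivAt (fun x => Real.sinh x - Real.sin x) (Real.cosh r - Real.cos r) r :=
      (Real.hasDerivAt_sinh r).sub (Real.hasDerivAt_sin r)
    exact hnum.div hde (hden r hr).ne'
  have hanti : StrictAntiOn d (Set.Icc t ω) := by
    apply strictAntiOn_of_deriv_neg (convex_Icc _ _)
    · apply ContinuousOn.div
      · exact (Real.continuous_cosh.sub Real.continuous_cos).continuousOn
      · exact (Real.continuous_sinh.sub Real.continuous_sin).continuousOn
      · exact fun r hr => (hden r (lt_of_lt_of_le h0 hr.1)).ne'
    · intro r hr
      rw [interior_Icc] at hr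
      have hr0 : 0 < r := lt_trans h0 hr.1
      rw [(hdd r hr0 hr.2).deriv]
      apply div_neg_of_neg_of_pos
      · have hN : (Real.sinh r + Real.sin r) * (Real.sinh r - Real.sin r) -
            (Real.cosh r - Real.cos r) * (Real.cosh r - Real.cos r) =
            2 * (Real.cos r * Real.cosh r - 1) := by
          have e1 := Real.sin_sq_add_cos_sq r
          have e2 := Real.cosh_sq_sub_sinh_sq r
          linear_combination - e2 - e1
        rw [hN]
        have := coscosh_lt_one hω hr0 hr.2
        linarith
      · exact pow_pos (hden r hr0) 2
  have hdω : d ω = σ := by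
    have hden2 : 0 < Real.sinh ω - Real.sin ω := sinh_sub_sin_pos hpos
    show (Real.cosh ω - Real.cos ω) / (Real.sinh ω - Real.sin ω) = σ
    rw [hσ, div_eq_div_iff hden2.ne' hS.ne']
    have hT : ((Real.cosh ω - Real.cos ω) * Real.sinh ω -
        (Real.cosh ω - 1) * (Real.sinh ω - Real.sin ω)) * Real.cosh ω = 0 := by
      linear_combination (-Real.sinh ω) * heq + (Real.cosh ω - 1) * hrel
    have := (mul_eq_zero.mp hT).resolve_right hC.ne'
    linarith
  have hmem1 : t ∈ Set.Icc t ω := Set.left_mem_Icc.mpr h1.le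
  have hmem2 : ω ∈ Set.Icc t ω := Set.right_mem_Icc.mpr h1.le
  have hlt : σ < d t := by
    have := hanti hmem1 hmem2 h1
    rwa [hdω] at this
  have hcancel : (Real.sinh t - Real.sin t) * d t = Real.cosh t - Real.cos t := by
    have hdt : d t = (Real.cosh t - Real.cos t)/(Real.sinh t - Real.sin t) := rfl
    rw [hdt, mul_comm, div_mul_cancel₀ _ (hden t h0).ne']
  have hsgfac : sg σ t = (Real.sinh t - Real.sin t) * (d t - σ) := by
    unfold sg
    linear_combination -hcancel
  rw [hsgfac]
  exact mul_pos (hden t h0) (by linarith)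

def nq (σ t : ℝ) : ℝ := (sg1 σ t)^2 - 2 * (sg σ t) * (sg2 σ t)

lemma nq_nonneg {ω : ℝ} (hω : IsLeast {x : ℝ | 0 < x ∧ Real.cos x * Real.cosh x = 1} ω)
    {t : ℝ} (ht : t ∈ Set.Icc 0 ω) :
    0 ≤ nq ((Real.cosh ω - 1)/Real.sinh ω) t := by
  obtain ⟨hpos, heq⟩ := hω.1
  obtain ⟨H1, H2, H3, H4⟩ := sigma_rels hω
  set σ := (Real.cosh ω - 1)/Real.sinh ω with hσ
  have hsg3mono : MonotoneOn (sg3 σ) (Set.Icc 0 ω) := by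
    apply monotoneOn_of_deriv_nonneg (convex_Icc _ _)
    · exact (continuous_sg3 σ).continuousOn
    · exact fun x _ => ((hasDerivAt_sg3 σ x).differentiableAt).differentiableWithinAt
    · intro x hx
      rw [interior_Icc] at hx
      rw [(hasDerivAt_sg3 σ x).deriv]
      exact (sg_pos hω hx.1 hx.2).le
  have h3half : sg3 σ (ω/2) = 0 := by
    have := sg3_symm H1 H2 H3 H4 (ω/2)
    have he : ω - ω/2 = ω/2 := by ring
    rw [he] at this
    linarith
  have h3neg : ∀ r ∈ Set.Icc (0:ℝ) (ω/2), sg3 σ r ≤ 0 := by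
    intro r hr
    have h1 : r ∈ Set.Icc 0 ω := ⟨hr.1, by linarith [hr.2]⟩
    have h2 : (ω/2) ∈ Set.Icc 0 ω := ⟨by linarith, by linarith⟩
    have := hsg3mono h1 h2 hr.2
    linarith [h3half]
  have hnq0 : nq σ 0 = 0 := by
    simp [nq, sg, sg1, sg2]
  have hnqd : ∀ x : ℝ, HasDerivAt (nq σ) (-2 * (sg σ x) * (sg3 σ x)) x := by
    intro x
    have h := (((hasDerivAt_sg1 σ x).pow 2)).sub
      ((((hasDerivAt_sg σ x).mul (hasDerivAt_sg2 σ x))).const_mul 2)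
    have hf : nq σ = (sg1 σ ^ 2 - fun y => 2 * (sg σ * sg2 σ) y) := by
      funext y; unfold nq; show _ = sg1 σ y ^ 2 - 2 * (sg σ y * sg2 σ y); ring
    rw [hf]; refine h.congr_deriv ?_
    push_cast; ring
  have hmonoq : MonotoneOn (nq σ) (Set.Icc 0 (ω/2)) := by
    apply monotoneOn_of_deriv_nonneg (convex_Icc _ _)
    · have hcontnq : Continuous (nq σ) := by
        unfold nq
        exact (((continuous_sg1 σ).pow 2)).sub
          ((continuous_const.mul (continuous_sg σ)).mul (continuous_sg2 σ))
      exact hcontnq.continuousOn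
    · exact fun x _ => (hnqd x).differentiableAt.differentiableWithinAt
    · intro x hx
      rw [interior_Icc] at hx
      rw [(hnqd x).deriv]
      have hsgpos : 0 ≤ sg σ x := (sg_pos hω hx.1 (by linarith [hx.2])).le
      have h3 : sg3 σ x ≤ 0 := h3neg x ⟨hx.1.le, hx.2.le⟩
      nlinarith
  have key : ∀ r ∈ Set.Icc (0:ℝ) (ω/2), 0 ≤ nq σ r := by
    intro r hr
    have := hmonoq (Set.left_mem_Icc.mpr (by linarith [hr.1, hr.2])) hr hr.1
    linarith [hnq0]
  rcases le_or_gt t (ω/2) with hle | hgt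
  · exact key t ⟨ht.1, hle⟩
  · have hsym : nq σ (ω - t) = nq σ t := by
      unfold nq
      rw [sg_symm H1 H2 H3 H4, sg1_symm H1 H2 H3 H4, sg2_symm H1 H2 H3 H4]
      ring
    rw [← hsym]
    exact key (ω - t) ⟨by linarith [ht.2], by linarith⟩

def yy0 (σ ω x : ℝ) : ℝ := sg σ (ω*x)
def yy1 (σ ω x : ℝ) : ℝ := ω * sg1 σ (ω*x)
def yy2 (σ ω x : ℝ) : ℝ := ω^2 * sg2 σ (ω*x)
def yy3 (σ ω x : ℝ) : ℝ := ω^3 * sg3 σ (ω*x)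

lemma hasDerivAt_mulc (ω x : ℝ) : HasDerivAt (fun y : ℝ => ω*y) ω x := by
  simpa using (hasDerivAt_id x).const_mul ω

lemma hasDerivAt_yy0 (σ ω x : ℝ) : HasDerivAt (yy0 σ ω) (yy1 σ ω x) x := by
  have h := HasDerivAt.comp x (hasDerivAt_sg σ (ω*x)) (hasDerivAt_mulc ω x)
  refine h.congr_deriv ?_
  unfold yy1; ring

lemma hasDerivAt_yy1 (σ ω x : ℝ) : HasDerivAt (yy1 σ ω) (yy2 σ ω x) x := by
  have h := (HasDerivAt.comp x (hasDerivAt_sg1 σ (ω*x)) (hasDerivAt_mulc ω x)).const_mul ω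
  refine h.congr_deriv ?_
  unfold yy2; ring

lemma hasDerivAt_yy2 (σ ω x : ℝ) : HasDerivAt (yy2 σ ω) (yy3 σ ω x) x := by
  have h := (HasDerivAt.comp x (hasDerivAt_sg2 σ (ω*x)) (hasDerivAt_mulc ω x)).const_mul (ω^2)
  refine h.congr_deriv ?_
  unfold yy3; ring

lemma hasDerivAt_yy3 (σ ω x : ℝ) : HasDerivAt (yy3 σ ω) (ω^4 * yy0 σ ω x) x := by
  have h := (HasDerivAt.comp x (hasDerivAt_sg3 σ (ω*x)) (hasDerivAt_mulc ω x)).const_mul (ω^3)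
  refine h.congr_deriv ?_
  unfold yy0; ring

lemma contDiff_yy0 (σ ω : ℝ) : ContDiff ℝ (⊤ : ℕ∞) (yy0 σ ω) := by
  unfold yy0
  exact (contDiff_sg σ).comp (contDiff_const.mul contDiff_id)

lemma continuous_yy0 (σ ω : ℝ) : Continuous (yy0 σ ω) := (contDiff_yy0 σ ω).continuous

lemma continuous_yy1 (σ ω : ℝ) : Continuous (yy1 σ ω) := by
  unfold yy1
  exact continuous_const.mul ((continuous_sg1 σ).comp (continuous_const.mul continuous_id))

lemma continuous_yy2 (σ ω : ℝ) : Continuous (yy2 σ ω) := by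
  unfold yy2
  exact continuous_const.mul ((continuous_sg2 σ).comp (continuous_const.mul continuous_id))

lemma continuous_yy3 (σ ω : ℝ) : Continuous (yy3 σ ω) := by
  unfold yy3
  exact continuous_const.mul ((continuous_sg3 σ).comp (continuous_const.mul continuous_id))


end ClampedBeamAux

/-- Clamped-beam inequality: for smooth `v` compactly supported in `(0,1)`,
`∫₀¹ (v'')² ≥ ω₁⁴ ∫₀¹ v²`, where `ω₁` is the smallest positive root of
`cos ω · cosh ω = 1`. -/
theorem clamped_beam_inequality
    (ω : ℝ) (hω : IsLeast {x : ℝ | 0 < x ∧ Real.cos x * Real.cosh x = 1} ω)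
    (v : ℝ → ℝ) (hv : Adm1 v) :
    (∫ x in (0:ℝ)..1, (deriv (deriv v) x) ^ 2) ≥
      ω ^ 4 * ∫ x in (0:ℝ)..1, (v x) ^ 2 := by
  obtain ⟨hvC, hvsupp, hvIoo⟩ := hv
  have hωpos : 0 < ω := hω.1.1
  set σ := (Real.cosh ω - 1)/Real.sinh ω with hσ
  have hY0pos : ∀ x ∈ Set.Ioo (0:ℝ) 1, 0 < yy0 σ ω x := by
    intro x hx
    exact sg_pos hω (mul_pos hωpos hx.1) (mul_lt_of_lt_one_right hωpos hx.2)
  set u : ℝ → ℝ := fun x => v x / yy0 σ ω x with hu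
  have hu_zero : ∀ x, x ∉ tsupport v → u x = 0 := by
    intro x hx
    rw [hu]
    simp [image_eq_zero_of_notMem_tsupport hx]
  have huC : ContDiff ℝ (⊤ : ℕ∞) u := by
    rw [contDiff_iff_contDiffAt]
    intro x
    by_cases hx : x ∈ Set.Ioo (0:ℝ) 1
    · exact hvC.contDiffAt.div (contDiff_yy0 σ ω).contDiffAt (hY0pos x hx).ne'
    · have hxn : x ∉ tsupport v := fun hmem => hx (hvIoo hmem)
      have hev : u =ᶠ[nhds x] (fun _ => (0:ℝ)) := by
        filter_upwards [(isClosed_tsupport v).isOpen_compl.mem_nhds hxn] with y hy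
        exact hu_zero y hy
      exact (contDiffAt_const (c := (0:ℝ))).congr_of_eventuallyEq hev
  have hveq : ∀ x, v x = yy0 σ ω x * u x := by
    intro x
    by_cases h0 : yy0 σ ω x = 0
    · have hvx : v x = 0 := by
        by_contra hne
        have hmem : x ∈ tsupport v := subset_tsupport v (by simpa [Function.mem_support] using hne)
        exact (hY0pos x (hvIoo hmem)).ne' h0
      simp [hu, hvx, h0]
    · rw [hu]
      field_simp
  have hudiff : Differentiable ℝ u := huC.differentiable (by simp)
  have hU1C : ContDiff ℝ (⊤ : ℕ∞) (deriv u) := (contDiff_infty_iff_deriv.mp huC).2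
  have hU1diff : Differentiable ℝ (deriv u) := hU1C.differentiable (by simp)
  have hU2C : ContDiff ℝ (⊤ : ℕ∞) (deriv (deriv u)) := (contDiff_infty_iff_deriv.mp hU1C).2
  have hu' : ∀ x, HasDerivAt u (deriv u x) x := fun x => (hudiff x).hasDerivAt
  have hU1' : ∀ x, HasDerivAt (deriv u) (deriv (deriv u) x) x := fun x => (hU1diff x).hasDerivAt
  have hvfun : v = fun x => yy0 σ ω x * u x := funext hveq
  have hdv : ∀ x, HasDerivAt v (yy1 σ ω x * u x + yy0 σ ω x * deriv u x) x := by
    intro x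
    rw [hvfun]
    exact (hasDerivAt_yy0 σ ω x).mul (hu' x)
  have hdv_eq : deriv v = fun x => yy1 σ ω x * u x + yy0 σ ω x * deriv u x :=
    funext fun x => (hdv x).deriv
  have hddv_eq : ∀ x, deriv (deriv v) x =
      yy2 σ ω x * u x + 2 * yy1 σ ω x * deriv u x + yy0 σ ω x * deriv (deriv u) x := by
    intro x
    have h : HasDerivAt (deriv v)
        ((yy2 σ ω x * u x + yy1 σ ω x * deriv u x) +
         (yy1 σ ω x * deriv u x + yy0 σ ω x * deriv (deriv u) x)) x := by
      rw [hdv_eq]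
      exact ((hasDerivAt_yy1 σ ω x).mul (hu' x)).add ((hasDerivAt_yy0 σ ω x).mul (hU1' x))
    rw [h.deriv]; ring
  -- boundary function B and its derivative EB
  set B : ℝ → ℝ := fun x => (1/2) * yy0 σ ω x * yy1 σ ω x * (deriv u x)^2
      - yy0 σ ω x * yy3 σ ω x * (u x)^2 + yy1 σ ω x * yy2 σ ω x * (u x)^2
      + 2 * yy0 σ ω x * yy2 σ ω x * u x * deriv u x with hBdef
  set EB : ℝ → ℝ := fun x => (1/2)*(yy1 σ ω x)^2*(deriv u x)^2
      + (5/2)*yy0 σ ω x*yy2 σ ω x*(deriv u x)^2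
      + yy0 σ ω x*yy1 σ ω x*(deriv u x)*(deriv (deriv u) x)
      - ω^4*(yy0 σ ω x)^2*(u x)^2 + (yy2 σ ω x)^2*(u x)^2
      + 4*yy1 σ ω x*yy2 σ ω x*(u x)*(deriv u x)
      + 2*yy0 σ ω x*yy2 σ ω x*(u x)*(deriv (deriv u) x) with hEBdef
  have hBd : ∀ x, HasDerivAt B (EB x) x := by
    intro x
    rw [hBdef, hEBdef]
    have h1 := (((hasDerivAt_const x ((1:ℝ)/2)).mul (hasDerivAt_yy0 σ ω x)).mul
      (hasDerivAt_yy1 σ ω x)).mul ((hU1' x).pow 2)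
    have h2 := ((hasDerivAt_yy0 σ ω x).mul (hasDerivAt_yy3 σ ω x)).mul ((hu' x).pow 2)
    have h3 := ((hasDerivAt_yy1 σ ω x).mul (hasDerivAt_yy2 σ ω x)).mul ((hu' x).pow 2)
    have h4 := ((((hasDerivAt_const x (2:ℝ)).mul (hasDerivAt_yy0 σ ω x)).mul
      (hasDerivAt_yy2 σ ω x)).mul (hu' x)).mul (hU1' x)
    have htot := ((h1.sub h2).add h3).add h4
    refine htot.congr_deriv ?_
    push_cast
    simp only [Pi.mul_apply, Pi.pow_apply]
    ring
  -- the nonnegative part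
  set Q : ℝ → ℝ := fun x => (yy0 σ ω x * deriv (deriv u) x + (3/2) * yy1 σ ω x * deriv u x)^2
      + (5/4)*((yy1 σ ω x)^2 - 2*yy0 σ ω x*yy2 σ ω x)*(deriv u x)^2 with hQdef
  have key : ∀ x, (deriv (deriv v) x)^2 = Q x + EB x + ω^4 * (v x)^2 := by
    intro x
    rw [hddv_eq x, hQdef, hEBdef, hveq x]
    ring
  -- continuity facts
  have hcu : Continuous u := huC.continuous
  have hcU1 : Continuous (deriv u) := hU1C.continuous
  have hcU2 : Continuous (deriv (deriv u)) := hU2C.continuous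
  have hcQ : Continuous Q := by
    rw [hQdef]
    apply Continuous.add
    · exact (((continuous_yy0 σ ω).mul hcU2).add
        ((continuous_const.mul (continuous_yy1 σ ω)).mul hcU1)).pow 2
    · exact (continuous_const.mul (((continuous_yy1 σ ω).pow 2).sub
        ((continuous_const.mul (continuous_yy0 σ ω)).mul (continuous_yy2 σ ω)))).mul
        (hcU1.pow 2)
  have hcEB : Continuous EB := by
    rw [hEBdef]
    have t1 : Continuous fun x => (1/2 : ℝ)*(yy1 σ ω x)^2*(deriv u x)^2 :=
      (continuous_const.mul ((continuous_yy1 σ ω).pow 2)).mul (hcU1.pow 2)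
    have t2 : Continuous fun x => (5/2 : ℝ)*yy0 σ ω x*yy2 σ ω x*(deriv u x)^2 :=
      (((continuous_const.mul (continuous_yy0 σ ω)).mul (continuous_yy2 σ ω))).mul (hcU1.pow 2)
    have t3 : Continuous fun x => yy0 σ ω x*yy1 σ ω x*(deriv u x)*(deriv (deriv u) x) :=
      (((continuous_yy0 σ ω).mul (continuous_yy1 σ ω)).mul hcU1).mul hcU2
    have t4 : Continuous fun x => ω^4*(yy0 σ ω x)^2*(u x)^2 :=
      (continuous_const.mul ((continuous_yy0 σ ω).pow 2)).mul (hcu.pow 2)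
    have t5 : Continuous fun x => (yy2 σ ω x)^2*(u x)^2 :=
      ((continuous_yy2 σ ω).pow 2).mul (hcu.pow 2)
    have t6 : Continuous fun x => 4*yy1 σ ω x*yy2 σ ω x*(u x)*(deriv u x) :=
      ((((continuous_const.mul (continuous_yy1 σ ω)).mul (continuous_yy2 σ ω)).mul hcu)).mul hcU1
    have t7 : Continuous fun x => 2*yy0 σ ω x*yy2 σ ω x*(u x)*(deriv (deriv u) x) :=
      ((((continuous_const.mul (continuous_yy0 σ ω)).mul (continuous_yy2 σ ω)).mul hcu)).mul hcU2
    exact (((((t1.add t2).add t3).sub t4).add t5).add t6).add t7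
  have hcv : Continuous v := hvC.continuous
  have hcddv : Continuous (deriv (deriv v)) := by
    have : deriv (deriv v) = fun x =>
        yy2 σ ω x * u x + 2 * yy1 σ ω x * deriv u x + yy0 σ ω x * deriv (deriv u) x :=
      funext hddv_eq
    rw [this]
    exact (((continuous_yy2 σ ω).mul hcu).add
      ((continuous_const.mul (continuous_yy1 σ ω)).mul hcU1)).add
      ((continuous_yy0 σ ω).mul hcU2)
  -- u and deriv u vanish at 0 and 1
  have hbdry : ∀ z : ℝ, z ∉ Set.Ioo (0:ℝ) 1 → u z = 0 ∧ deriv u z = 0 := by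
    intro z hz
    have hzn : z ∉ tsupport v := fun hmem => hz (hvIoo hmem)
    have hev : u =ᶠ[nhds z] (fun _ => (0:ℝ)) := by
      filter_upwards [(isClosed_tsupport v).isOpen_compl.mem_nhds hzn] with y hy
      exact hu_zero y hy
    refine ⟨hu_zero z hzn, ?_⟩
    rw [hev.deriv_eq]
    simp
  have hB0 : B 0 = 0 := by
    obtain ⟨h1, h2⟩ := hbdry 0 (by simp)
    rw [hBdef]
    simp [h1, h2]
  have hB1 : B 1 = 0 := by
    obtain ⟨h1, h2⟩ := hbdry 1 (by simp)
    rw [hBdef]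
    simp [h1, h2]
  have hEBint : ∫ x in (0:ℝ)..1, EB x = 0 := by
    have := intervalIntegral.integral_eq_sub_of_hasDerivAt (f := B) (f' := EB)
      (fun x _ => hBd x) (hcEB.intervalIntegrable 0 1)
    rw [this, hB0, hB1, sub_zero]
  have hQnonneg : 0 ≤ ∫ x in (0:ℝ)..1, Q x := by
    apply intervalIntegral.integral_nonneg (by norm_num)
    intro x hx
    rw [hQdef]
    apply add_nonneg (sq_nonneg _)
    apply mul_nonneg (mul_nonneg (by norm_num) ?_) (sq_nonneg _)
    have hid : (yy1 σ ω x)^2 - 2*yy0 σ ω x*yy2 σ ω x = ω^2 * nq σ (ω*x) := by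
      unfold yy0 yy1 yy2 nq
      ring
    rw [hid]
    apply mul_nonneg (sq_nonneg ω)
    exact nq_nonneg hω ⟨mul_nonneg hωpos.le hx.1, mul_le_of_le_one_right hωpos.le hx.2⟩
  -- assemble
  have hsplit : ∫ x in (0:ℝ)..1, (deriv (deriv v) x)^2 =
      (∫ x in (0:ℝ)..1, Q x) + (∫ x in (0:ℝ)..1, EB x)
        + ∫ x in (0:ℝ)..1, ω^4 * (v x)^2 := by
    have hint1 : IntervalIntegrable Q MeasureTheory.volume 0 1 := hcQ.intervalIntegrable 0 1
    have hint2 : IntervalIntegrable EB MeasureTheory.volume 0 1 := hcEB.intervalIntegrable 0 1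
    have hint3 : IntervalIntegrable (fun x => ω^4 * (v x)^2) MeasureTheory.volume 0 1 :=
      (continuous_const.mul (hcv.pow 2)).intervalIntegrable 0 1
    have hco : Set.EqOn (fun x => (deriv (deriv v) x)^2)
        (fun x => Q x + EB x + ω^4*(v x)^2) (Set.uIcc (0:ℝ) 1) := fun x _ => key x
    rw [intervalIntegral.integral_congr hco,
      intervalIntegral.integral_add (hint1.add hint2) hint3,
      intervalIntegral.integral_add hint1 hint2]
  have hconstmul : ∫ x in (0:ℝ)..1, ω^4 * (v x)^2 = ω^4 * ∫ x in (0:ℝ)..1, (v x)^2 :=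
    intervalIntegral.integral_const_mul _ _
  rw [ge_iff_le]
  rw [hsplit, hEBint, hconstmul]
  linarith
end
end
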